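/- arXiv:2105.12467 — 9 statements merged into one kernel-verified Lean document; each statement's English description precedes it below -/
import Mathlib

section
/- Let (m_{nk})_{n,k∈ω} be an infinite matrix of nonnegative real numbers such that for every n the series Σ_k m_{nk} converges, for every k the supremum sup_n m_{nk} is finite, and m_{nn} > n for every n. Then there exists a strictly increasing sequence (l_p)_{p∈ω} of natural numbers such that for every p we have m_{l_p l_p} > Σ_{i=0}^{p-1} m_{l_p l_i} + p + 1. -/
lemma mem_le_foldr_max (lst : List ℕ) : ∀ x ∈ lst, x ≤ lst.foldr max 0 := by
  induction lst with
  | nil => simp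
  | cons a t ih =>
    intro x hx
    simp only [List.mem_cons] at hx
    simp only [List.foldr]
    rcases hx with rfl | hx
    · exact le_max_left _ _
    · exact (ih x hx).trans (le_max_right _ _)

theorem matrix_diagonal_selection
    (m : ℕ → ℕ → ℝ)
    (hnonneg : ∀ n k, 0 ≤ m n k)
    (hrow : ∀ n, Summable (fun k => m n k))
    (hcol : ∀ k, BddAbove (Set.range (fun n => m n k)))
    (hdiag : ∀ n : ℕ, (n : ℝ) < m n n) :
    ∃ l : ℕ → ℕ, StrictMono l ∧
      ∀ p : ℕ, (∑ i ∈ Finset.range p, m (l p) (l i)) + p + 1 < m (l p) (l p) := by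
  have hle : ∀ n k, m n k ≤ ⨆ j, m j k := fun n k => le_ciSup (hcol k) n
  have key : ∀ lst : List ℕ, ∃ n : ℕ, (∀ x ∈ lst, x < n) ∧
      ((lst.map (m n)).sum + lst.length + 1 < m n n) := by
    intro lst
    set C : ℝ := (lst.map (fun x => ⨆ j, m j x)).sum with hC
    set N : ℕ := lst.foldr max 0 + ⌈C⌉₊ + lst.length + 2 with hN
    refine ⟨N, ?_, ?_⟩
    · intro x hx
      have := mem_le_foldr_max lst x hx
      omega
    · have h1 : (lst.map (m N)).sum ≤ C := by
        rw [hC]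
        exact List.sum_le_sum (fun x _ => hle N x)
      have h2 : C ≤ (⌈C⌉₊ : ℝ) := Nat.le_ceil C
      have h3 : ((⌈C⌉₊ : ℝ)) + lst.length + 1 ≤ (N : ℝ) := by
        rw [hN]
        push_cast
        linarith [Nat.cast_nonneg (α := ℝ) (lst.foldr max 0)]
      have := hdiag N
      linarith
  choose next hnext using key
  set s : ℕ → List ℕ := fun p => Nat.rec [] (fun _ prev => prev ++ [next prev]) p with hs
  set l : ℕ → ℕ := fun p => next (s p) with hl
  have hssucc : ∀ p, s (p + 1) = s p ++ [l p] := fun p => rfl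
  have hlen : ∀ p, (s p).length = p := by
    intro p
    induction p with
    | zero => rfl
    | succ p ih => rw [hssucc, List.length_append, ih]; rfl
  have hsum : ∀ p j, ((s p).map (m j)).sum = ∑ i ∈ Finset.range p, m j (l i) := by
    intro p j
    induction p with
    | zero => simp [hs]
    | succ p ih =>
      rw [hssucc, List.map_append, List.sum_append, ih, Finset.sum_range_succ]
      simp
  refine ⟨l, ?_, ?_⟩
  · apply strictMono_nat_of_lt_succ
    intro p
    have hmem : l p ∈ s (p + 1) := by
      rw [hssucc]
      exact List.mem_append_right _ (List.mem_singleton_self _)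
    exact (hnext (s (p + 1))).1 _ hmem
  · intro p
    have h := (hnext (s p)).2
    rw [hsum p (l p), hlen p] at h
    exact h
end

section
/- Let (μ_l)_{l∈ω} be a sequence of bounded finitely additive measures on a Boolean algebra A and let (V_l)_{l∈ω} be an antichain in A (i.e. V_i ∧ V_j = 0 for i ≠ j). Then there exists a strictly increasing sequence (l_p)_{p∈ω} of natural numbers such that for every p, Σ_{i>p} |μ_{l_p}|(V_{l_i}) < 1. -/
/-- A finitely additive (signed) measure on a Boolean algebra. -/
def IsFinAddMeasure {α : Type*} [BooleanAlgebra α] (μ : α → ℝ) : Prop :=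
  ∀ a b : α, a ⊓ b = ⊥ → μ (a ⊔ b) = μ a + μ b

/-- The set of values whose supremum is the total variation of `μ` on `a`. -/
def varSet {α : Type*} [BooleanAlgebra α] (μ : α → ℝ) (a : α) : Set ℝ :=
  {r | ∃ b c : α, b ⊓ c = ⊥ ∧ b ⊔ c ≤ a ∧ r = |μ b| + |μ c|}

/-- The total variation `|μ|(a)`. -/
noncomputable def totalVar {α : Type*} [BooleanAlgebra α] (μ : α → ℝ) (a : α) : ℝ :=
  sSup (varSet μ a)

section aux
variable {α : Type*} [BooleanAlgebra α] {μ : α → ℝ}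

lemma mu_bot (hadd : IsFinAddMeasure μ) : μ ⊥ = 0 := by
  have := hadd ⊥ ⊥ (by simp)
  simp at this; linarith

lemma varSet_nonempty (hadd : IsFinAddMeasure μ) (a : α) : (varSet μ a).Nonempty :=
  ⟨0, ⊥, ⊥, by simp, by simp, by simp [mu_bot hadd]⟩

lemma varSet_mono {a b : α} (h : a ≤ b) : varSet μ a ⊆ varSet μ b := by
  rintro r ⟨x, y, hxy, hle, rfl⟩
  exact ⟨x, y, hxy, hle.trans h, rfl⟩

lemma varSet_bdd (hbdd : BddAbove (varSet μ ⊤)) (a : α) : BddAbove (varSet μ a) :=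
  hbdd.mono (varSet_mono le_top)

lemma totalVar_nonneg (hadd : IsFinAddMeasure μ) (hbdd : BddAbove (varSet μ ⊤)) (a : α) :
    0 ≤ totalVar μ a :=
  le_csSup (varSet_bdd hbdd a) ⟨⊥, ⊥, by simp, by simp, by simp [mu_bot hadd]⟩

lemma totalVar_mono (hadd : IsFinAddMeasure μ) (hbdd : BddAbove (varSet μ ⊤)) {a b : α}
    (h : a ≤ b) : totalVar μ a ≤ totalVar μ b :=
  csSup_le_csSup (varSet_bdd hbdd b) (varSet_nonempty hadd a) (varSet_mono h)

/-- positive part selector -/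
noncomputable def pp (μ : α → ℝ) (x : α) : α := if 0 ≤ μ x then x else ⊥
noncomputable def np (μ : α → ℝ) (x : α) : α := if 0 ≤ μ x then ⊥ else x

lemma pp_le (x : α) : pp μ x ≤ x := by unfold pp; split <;> simp
lemma np_le (x : α) : np μ x ≤ x := by unfold np; split <;> simp

lemma mu_pp_nonneg (hadd : IsFinAddMeasure μ) (x : α) : 0 ≤ μ (pp μ x) := by
  unfold pp; split
  · assumption
  · simp [mu_bot hadd]

lemma mu_np_nonpos (hadd : IsFinAddMeasure μ) (x : α) : μ (np μ x) ≤ 0 := by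
  unfold np; split
  · simp [mu_bot hadd]
  · linarith [not_le.mp (by assumption : ¬ 0 ≤ μ x)]

lemma abs_eq_pp_sub_np (hadd : IsFinAddMeasure μ) (x : α) :
    |μ x| = μ (pp μ x) - μ (np μ x) := by
  unfold pp np; split
  · rw [abs_of_nonneg (by assumption)]; simp [mu_bot hadd]
  · rw [abs_of_neg (not_le.mp (by assumption))]; simp [mu_bot hadd]

lemma disj_pp_np_self (x : α) : Disjoint (pp μ x) (np μ x) := by
  unfold pp np; split <;> simp

lemma superadd (hadd : IsFinAddMeasure μ) (hbdd : BddAbove (varSet μ ⊤)) {a b : α}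
    (hab : a ⊓ b = ⊥) : totalVar μ a + totalVar μ b ≤ totalVar μ (a ⊔ b) := by
  have key : ∀ r ∈ varSet μ a, ∀ s ∈ varSet μ b, r + s ≤ totalVar μ (a ⊔ b) := by
    rintro r ⟨b₁, c₁, d₁, le₁, rfl⟩ s ⟨b₂, c₂, d₂, le₂, rfl⟩
    -- disjointness facts
    have dab : Disjoint a b := disjoint_iff.mpr hab
    have hb₁ : b₁ ≤ a := le_trans le_sup_left le₁
    have hc₁ : c₁ ≤ a := le_trans le_sup_right le₁
    have hb₂ : b₂ ≤ b := le_trans le_sup_left le₂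
    have hc₂ : c₂ ≤ b := le_trans le_sup_right le₂
    have D11 : Disjoint b₁ c₁ := disjoint_iff.mpr d₁
    have D22 : Disjoint b₂ c₂ := disjoint_iff.mpr d₂
    have D12 : Disjoint b₁ b₂ := dab.mono hb₁ hb₂
    have D12' : Disjoint b₁ c₂ := dab.mono hb₁ hc₂
    have D12'' : Disjoint c₁ b₂ := dab.mono hc₁ hb₂
    have D12''' : Disjoint c₁ c₂ := dab.mono hc₁ hc₂
    set B : α := pp μ b₁ ⊔ pp μ c₁ ⊔ pp μ b₂ ⊔ pp μ c₂ with hB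
    set C : α := np μ b₁ ⊔ np μ c₁ ⊔ np μ b₂ ⊔ np μ c₂ with hC
    have dpn : ∀ x y : α, Disjoint x y → Disjoint (pp μ x) (np μ y) :=
      fun x y h => h.mono (pp_le x) (np_le y)
    have dpp : ∀ x y : α, Disjoint x y → Disjoint (pp μ x) (pp μ y) :=
      fun x y h => h.mono (pp_le x) (pp_le y)
    have dnn : ∀ x y : α, Disjoint x y → Disjoint (np μ x) (np μ y) :=
      fun x y h => h.mono (np_le x) (np_le y)
    have dnp : ∀ x y : α, Disjoint x y → Disjoint (np μ x) (pp μ y) :=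
      fun x y h => h.mono (np_le x) (pp_le y)
    have hBC : Disjoint B C := by
      rw [hB, hC]
      simp only [disjoint_sup_left, disjoint_sup_right]
      and_intros <;>
        first
        | exact disj_pp_np_self _
        | exact dpn _ _ D11 | exact dpn _ _ D11.symm
        | exact dpn _ _ D22 | exact dpn _ _ D22.symm
        | exact dpn _ _ D12 | exact dpn _ _ D12.symm
        | exact dpn _ _ D12' | exact dpn _ _ D12'.symm
        | exact dpn _ _ D12'' | exact dpn _ _ D12''.symm
        | exact dpn _ _ D12''' | exact dpn _ _ D12'''.symm
      /- old: refine ⟨⟨⟨?_, ?_, ?_, ?_⟩, ?_, ?_, ?_, ?_⟩, ⟨?_, ?_, ?_, ?_⟩, ?_, ?_, ?_, ?_⟩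
      · exact disj_pp_np_self b₁
      · exact dpn _ _ D11
      · exact dpn _ _ D12
      · exact dpn _ _ D12'
      · exact dpn _ _ D11.symm
      · exact disj_pp_np_self c₁
      · exact dpn _ _ D12''
      · exact dpn _ _ D12'''
      · exact dpn _ _ D12.symm
      · exact dpn _ _ D12''.symm
      · exact disj_pp_np_self b₂
      · exact dpn _ _ D22
      · exact dpn _ _ D12'.symm
      · exact dpn _ _ D12'''.symm
      · exact dpn _ _ D22.symm
      · exact disj_pp_np_self c₂ -/
    have muB : μ B = μ (pp μ b₁) + μ (pp μ c₁) + μ (pp μ b₂) + μ (pp μ c₂) := by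
      rw [hB]
      rw [hadd _ _ (disjoint_iff.mp (by
        simp only [disjoint_sup_left]
        and_intros <;> first
          | exact dpp _ _ D12' | exact dpp _ _ D12''' | exact dpp _ _ D22))]
      rw [hadd _ _ (disjoint_iff.mp (by
        simp only [disjoint_sup_left]
        and_intros <;> first | exact dpp _ _ D12 | exact dpp _ _ D12''))]
      rw [hadd _ _ (disjoint_iff.mp (dpp _ _ D11))]
    have muC : μ C = μ (np μ b₁) + μ (np μ c₁) + μ (np μ b₂) + μ (np μ c₂) := by
      rw [hC]
      rw [hadd _ _ (disjoint_iff.mp (by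
        simp only [disjoint_sup_left]
        and_intros <;> first
          | exact dnn _ _ D12' | exact dnn _ _ D12''' | exact dnn _ _ D22))]
      rw [hadd _ _ (disjoint_iff.mp (by
        simp only [disjoint_sup_left]
        and_intros <;> first | exact dnn _ _ D12 | exact dnn _ _ D12''))]
      rw [hadd _ _ (disjoint_iff.mp (dnn _ _ D11))]
    have hBle : B ⊔ C ≤ a ⊔ b := by
      rw [hB, hC]
      refine sup_le ?_ ?_ <;>
      · refine sup_le (sup_le (sup_le ?_ ?_) ?_) ?_ <;>
        first
        | exact le_trans (pp_le _) (le_trans (by assumption) le_sup_left)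
        | exact le_trans (pp_le _) (le_trans (by assumption) le_sup_right)
        | exact le_trans (np_le _) (le_trans (by assumption) le_sup_left)
        | exact le_trans (np_le _) (le_trans (by assumption) le_sup_right)
    have habsB : |μ B| = μ B := abs_of_nonneg (by
      rw [muB]
      have := mu_pp_nonneg hadd b₁; have := mu_pp_nonneg hadd c₁
      have := mu_pp_nonneg hadd b₂; have := mu_pp_nonneg hadd c₂
      linarith)
    have habsC : |μ C| = -μ C := abs_of_nonpos (by
      rw [muC]
      have := mu_np_nonpos hadd b₁; have := mu_np_nonpos hadd c₁
      have := mu_np_nonpos hadd b₂; have := mu_np_nonpos hadd c₂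
      linarith)
    have hmem : |μ b₁| + |μ c₁| + (|μ b₂| + |μ c₂|) ∈ varSet μ (a ⊔ b) := by
      refine ⟨B, C, disjoint_iff.mp hBC, hBle, ?_⟩
      rw [habsB, habsC, muB, muC, abs_eq_pp_sub_np hadd b₁, abs_eq_pp_sub_np hadd c₁,
        abs_eq_pp_sub_np hadd b₂, abs_eq_pp_sub_np hadd c₂]
      ring
    exact le_csSup (varSet_bdd hbdd _) hmem
  have h2 : ∀ r ∈ varSet μ a, totalVar μ b ≤ totalVar μ (a ⊔ b) - r := fun r hr =>
    csSup_le (varSet_nonempty hadd b) fun s hs => by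
      have := key r hr s hs; linarith
  have h1 : totalVar μ a ≤ totalVar μ (a ⊔ b) - totalVar μ b :=
    csSup_le (varSet_nonempty hadd a) fun r hr => by have := h2 r hr; linarith
  linarith

lemma finset_sum_le (hadd : IsFinAddMeasure μ) (hbdd : BddAbove (varSet μ ⊤))
    (V : ℕ → α) (hV : ∀ i j, i ≠ j → V i ⊓ V j = ⊥) (s : Finset ℕ) :
    ∑ i ∈ s, totalVar μ (V i) ≤ totalVar μ ⊤ := by
  have main : ∀ s : Finset ℕ, ∑ i ∈ s, totalVar μ (V i) ≤ totalVar μ (s.sup V) := by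
    intro s
    induction s using Finset.cons_induction with
    | empty => simpa using totalVar_nonneg hadd hbdd ⊥
    | cons i s hi ih =>
      rw [Finset.sum_cons, Finset.sup_cons]
      have hd : V i ⊓ s.sup V = ⊥ := by
        refine disjoint_iff.mp (Finset.disjoint_sup_right.mpr fun j hj => ?_)
        exact disjoint_iff.mpr (hV i j (by rintro rfl; exact hi hj))
      calc totalVar μ (V i) + ∑ x ∈ s, totalVar μ (V x)
          ≤ totalVar μ (V i) + totalVar μ (s.sup V) := by linarith
        _ ≤ totalVar μ (V i ⊔ s.sup V) := superadd hadd hbdd hd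
  exact (main s).trans (totalVar_mono hadd hbdd le_top)

end aux

theorem antichain_tails {α : Type*} [BooleanAlgebra α]
    (μ : ℕ → α → ℝ)
    (hadd : ∀ l, IsFinAddMeasure (μ l))
    (hbdd : ∀ l, BddAbove (varSet (μ l) ⊤))
    (V : ℕ → α)
    (hV : ∀ i j, i ≠ j → V i ⊓ V j = ⊥) :
    ∃ l : ℕ → ℕ, StrictMono l ∧
      ∀ p : ℕ, (∑' i : {i : ℕ // p < i}, totalVar (μ (l p)) (V (l i))) < 1 := by
  set f : ℕ → ℕ → ℝ := fun m j => totalVar (μ m) (V j) with hf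
  have hf0 : ∀ m j, 0 ≤ f m j := fun m j => totalVar_nonneg (hadd m) (hbdd m) _
  have hsum : ∀ m, Summable (f m) := by
    intro m
    refine summable_of_sum_range_le (c := totalVar (μ m) ⊤) (hf0 m) fun n => ?_
    exact finset_sum_le (hadd m) (hbdd m) V hV (Finset.range n)
  -- tail estimate
  have tail : ∀ m N₀, ∃ N, N₀ < N ∧ (∑' k, f m (k + N)) < 1 := by
    intro m N₀
    have hlt : ∀ᶠ n in Filter.atTop,
        (∑' i, f m i) - 1 < ∑ i ∈ Finset.range n, f m i := by
      have ht : Filter.Tendsto (fun n => ∑ i ∈ Finset.range n, f m i)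
          Filter.atTop (nhds (∑' i, f m i)) := (hsum m).hasSum.tendsto_sum_nat
      exact ht.eventually_const_lt (by linarith)
    obtain ⟨N, hN₀, hN⟩ := ((Filter.eventually_gt_atTop N₀).and hlt).exists
    refine ⟨N, hN₀, ?_⟩
    have hsplit := Summable.sum_add_tsum_nat_add (f := f m) N (hsum m)
    linarith
  -- recursive construction
  let l : ℕ → ℕ := fun p => Nat.rec 0 (fun _ prev => (tail prev prev).choose) p
  have hlsucc : ∀ p, l (p + 1) = (tail (l p) (l p)).choose := fun p => rfl
  have hmono : StrictMono l := by
    apply strictMono_nat_of_lt_succ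
    intro p
    rw [hlsucc]
    exact (tail (l p) (l p)).choose_spec.1
  refine ⟨l, hmono, fun p => ?_⟩
  have hspec := (tail (l p) (l p)).choose_spec.2
  rw [← hlsucc] at hspec
  set N := l (p + 1) with hN
  have hge : ∀ i : ℕ, p < i → N ≤ l i := fun i hi => hmono.le_iff_le.mpr hi
  -- compare the subtype tsum with the tail tsum
  have hle : (∑' i : {i : ℕ // p < i}, f (l p) (l i)) ≤ ∑' k, f (l p) (k + N) := by
    have hinj : Function.Injective (fun i : {i : ℕ // p < i} => l i.val - N) := by
      rintro ⟨i, hi⟩ ⟨j, hj⟩ h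
      simp only at h
      have h1 : N ≤ l i := hge i hi
      have h2 : N ≤ l j := hge j hj
      have : l i = l j := by omega
      exact Subtype.ext (hmono.injective this)
    refine Summable.tsum_le_tsum_of_inj _ hinj (fun c _ => hf0 _ _) ?_ ?_ ?_
    · rintro ⟨i, hi⟩
      have : l i - N + N = l i := by have := hge i hi; omega
      simp only [this]
      exact le_refl _
    · exact (hsum (l p)).comp_injective
        (fun i j h => Subtype.ext (hmono.injective h))
    · exact (summable_nat_add_iff N).mpr (hsum (l p))
  exact lt_of_le_of_lt hle hspec
end

section
/- Let λ be the standard product (Haar) measure on the Cantor space 2^ω, and for n ∈ ω, i ∈ {0,1} let S_n^i = {x ∈ 2^ω : x(n) = i}. Define 𝔸 = {A Borel ⊆ 2^ω : lim_{n→∞} n·(λ(S_n^0 ∩ A) − λ(S_n^1 ∩ A)) = 0}. Then for any Boolean subalgebra A of the Borel sets with Clopen(2^ω) ⊆ A ⊆ 𝔸, the sequence of finitely additive measures μ_n(A) = n·(λ(S_n^0 ∩ A) − λ(S_n^1 ∩ A)) on A is pointwise bounded but not uniformly bounded; hence A does not have the Nikodym property. -/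
open MeasureTheory Filter Topology

/-- The cylinder in Cantor space determined by `σ : 2^n`. -/
def cyl (n : ℕ) (σ : Fin n → Bool) : Set (ℕ → Bool) := {x | ∀ i : Fin n, x i = σ i}

/-- `S n i = {x : x(n) = i}`. -/
def Sset (n : ℕ) (i : Bool) : Set (ℕ → Bool) := {x | x n = i}

lemma cyl_measurable (n : ℕ) (σ : Fin n → Bool) : MeasurableSet (cyl n σ) := by
  have h : cyl n σ = ⋂ i : Fin n, (fun x : ℕ → Bool => x i) ⁻¹' {σ i} := by
    ext x; simp [cyl]
  rw [h]
  exact MeasurableSet.iInter fun i =>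
    (measurable_pi_apply _) (measurableSet_singleton _)

lemma Sset_eq (n : ℕ) (b : Bool) :
    Sset n b = ⋃ σ : Fin n → Bool, cyl (n + 1) (Fin.snoc σ b) := by
  ext x
  constructor
  · intro hx
    refine Set.mem_iUnion.2 ⟨fun i => x i, fun i => ?_⟩
    induction i using Fin.lastCases with
    | last => simpa [Fin.snoc_last, Sset] using hx
    | cast j => simp [Fin.snoc_castSucc]
  · intro hx
    rcases Set.mem_iUnion.1 hx with ⟨σ, hσ⟩
    have := hσ (Fin.last n)
    simpa [Sset, Fin.snoc_last] using this

lemma lam_Sset (lam : Measure (ℕ → Bool))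
    (hlam : ∀ (n : ℕ) (σ : Fin n → Bool), lam (cyl n σ) = (1 / 2 : ENNReal) ^ n)
    (n : ℕ) (b : Bool) : lam (Sset n b) = 1 / 2 := by
  rw [Sset_eq]
  rw [measure_iUnion ?_ (fun σ => cyl_measurable _ _)]
  · rw [tsum_fintype]
    simp only [hlam]
    rw [Finset.sum_const, Finset.card_univ]
    have hcard : Fintype.card (Fin n → Bool) = 2 ^ n := by simp
    rw [hcard, nsmul_eq_mul]
    push_cast
    rw [pow_succ, ← mul_assoc]
    have : (2 : ENNReal) ^ n * (1 / 2 : ENNReal) ^ n = 1 := by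
      rw [← mul_pow]
      norm_num
      rw [ENNReal.mul_inv_cancel (by norm_num) (by norm_num)]
      simp
    rw [this, one_mul]
  · intro σ τ hστ
    simp only [Function.onFun, Set.disjoint_left]
    intro x hxσ hxτ
    apply hστ
    funext j
    have h1 := hxσ (Fin.castSucc j)
    have h2 := hxτ (Fin.castSucc j)
    rw [Fin.snoc_castSucc] at h1 h2
    rw [← h1, ← h2]

theorem ambient_family_not_nikodym
    (lam : Measure (ℕ → Bool)) [IsProbabilityMeasure lam]
    (hlam : ∀ (n : ℕ) (σ : Fin n → Bool), lam (cyl n σ) = (1 / 2 : ENNReal) ^ n)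
    (𝒜 : Set (Set (ℕ → Bool)))
    (hmeas : ∀ A ∈ 𝒜, MeasurableSet A)
    (hcompl : ∀ A ∈ 𝒜, Aᶜ ∈ 𝒜)
    (hunion : ∀ A ∈ 𝒜, ∀ B ∈ 𝒜, A ∪ B ∈ 𝒜)
    (hclopen : ∀ U : Set (ℕ → Bool), IsClopen U → U ∈ 𝒜)
    (hamb : ∀ A ∈ 𝒜, Tendsto
      (fun n : ℕ => (n : ℝ) *
        ((lam (Sset n false ∩ A)).toReal - (lam (Sset n true ∩ A)).toReal))
      atTop (𝓝 0)) :
    (∀ A ∈ 𝒜, ∃ C : ℝ, ∀ n : ℕ,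
      |(n : ℝ) * ((lam (Sset n false ∩ A)).toReal - (lam (Sset n true ∩ A)).toReal)| ≤ C) ∧
    ¬ (∃ C : ℝ, ∀ n : ℕ, ∀ A ∈ 𝒜,
      |(n : ℝ) * ((lam (Sset n false ∩ A)).toReal - (lam (Sset n true ∩ A)).toReal)| ≤ C) := by
  constructor
  · intro A hA
    have h := (hamb A hA).abs
    rw [abs_zero] at h
    obtain ⟨C, hC⟩ := h.bddAbove_range
    exact ⟨C, fun n => hC ⟨n, rfl⟩⟩
  · rintro ⟨C, hC⟩
    obtain ⟨n, hn⟩ := exists_nat_gt (2 * C)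
    have hAmem : Sset n false ∈ 𝒜 := by
      apply hclopen
      have : Sset n false = (fun x : ℕ → Bool => x n) ⁻¹' {false} := by
        ext x; simp [Sset]
      rw [this]
      exact (isClopen_discrete _).preimage (continuous_apply n)
    have h1 : Sset n false ∩ Sset n false = Sset n false := Set.inter_self _
    have h2 : Sset n true ∩ Sset n false = ∅ := by
      ext x; simp [Sset]
    have hval : (n : ℝ) * ((lam (Sset n false ∩ Sset n false)).toReal -
        (lam (Sset n true ∩ Sset n false)).toReal) = n / 2 := by
      rw [h1, h2, measure_empty, lam_Sset lam hlam]
      norm_num [ENNReal.toReal_inv]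
      ring
    have := hC n (Sset n false) hAmem
    rw [hval, abs_of_nonneg (by positivity)] at this
    linarith
end

section
/- With λ the uniform product measure on 2^ω, χ_n(A) = min{λ(A △ B) : B ∈ F_n}, and 𝔹 = {A Borel : lim n·χ_n(A) = 0}: every A ∈ 𝔹 satisfies lim_{n→∞} n·(λ(S_n^0 ∩ A) − λ(S_n^1 ∩ A)) = 0, where S_n^i = {x : x(n) = i}. That is, 𝔹 ⊆ 𝔸. -/
open MeasureTheory Filter Topology

/-- The finite Boolean algebra `F_n` of unions of cylinders of length `n`. -/
def FnAlg (n : ℕ) : Set (Set (ℕ → Bool)) :=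
  {B | ∃ S : Set (Fin n → Bool), B = ⋃ σ ∈ S, cyl n σ}

/-- `χ_n(A) = min{λ(A △ B) : B ∈ F_n}`. -/
noncomputable def chi (lam : Measure (ℕ → Bool)) (n : ℕ) (A : Set (ℕ → Bool)) : ℝ :=
  sInf {r : ℝ | ∃ B ∈ FnAlg n, r = (lam (symmDiff A B)).toReal}

/-- The family `𝔹 = {A Borel : lim n·χ_n(A) = 0}`. -/
def BB (lam : Measure (ℕ → Bool)) : Set (Set (ℕ → Bool)) :=
  {A | MeasurableSet A ∧
    Tendsto (fun n : ℕ => (n : ℝ) * chi lam n A) atTop (𝓝 0)}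

lemma Sset_measurable (n : ℕ) (i : Bool) : MeasurableSet (Sset n i) := by
  have : Sset n i = (fun x : ℕ → Bool => x n) ⁻¹' {i} := by ext x; simp [Sset]
  rw [this]
  exact (measurable_pi_apply n) (measurableSet_singleton i)

lemma cyl_disjoint {n : ℕ} {σ τ : Fin n → Bool} (h : σ ≠ τ) :
    Disjoint (cyl n σ) (cyl n τ) := by
  rw [Set.disjoint_left]
  intro x hx hx'
  exact h (funext fun i => (hx i).symm.trans (hx' i))

lemma Sset_inter_cyl (n : ℕ) (i : Bool) (σ : Fin n → Bool) :
    Sset n i ∩ cyl n σ = cyl (n + 1) (Fin.snoc σ i) := by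
  ext x
  simp only [Sset, cyl, Set.mem_inter_iff, Set.mem_setOf_eq]
  constructor
  · rintro ⟨h1, h2⟩ j
    refine Fin.lastCases ?_ ?_ j
    · simpa [Fin.snoc_last] using h1
    · intro k; simpa [Fin.snoc_castSucc] using h2 k
  · intro h
    refine ⟨?_, fun k => ?_⟩
    · simpa [Fin.snoc_last] using h (Fin.last n)
    · simpa [Fin.snoc_castSucc] using h (Fin.castSucc k)

lemma measure_Sset_inter_eq (lam : Measure (ℕ → Bool))
    (hlam : ∀ (n : ℕ) (σ : Fin n → Bool), lam (cyl n σ) = (1 / 2 : ENNReal) ^ n)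
    {n : ℕ} {B : Set (ℕ → Bool)} (hB : B ∈ FnAlg n) :
    lam (Sset n false ∩ B) = lam (Sset n true ∩ B) := by
  obtain ⟨S, rfl⟩ := hB
  have h : ∀ i : Bool, lam (Sset n i ∩ ⋃ σ ∈ S, cyl n σ)
      = ∑' _ : S, (1 / 2 : ENNReal) ^ (n + 1) := by
    intro i
    rw [Set.inter_iUnion₂]
    rw [measure_biUnion S.to_countable
        (fun σ _ τ _ hστ => Disjoint.mono Set.inter_subset_right Set.inter_subset_right
          (cyl_disjoint hστ))
        (fun σ _ => (Sset_measurable n i).inter (cyl_measurable n σ))]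
    exact tsum_congr fun σ => by rw [Sset_inter_cyl, hlam]
  rw [h false, h true]

lemma abs_measure_inter_diff_le (lam : Measure (ℕ → Bool)) [IsProbabilityMeasure lam]
    (S A B : Set (ℕ → Bool)) :
    |(lam (S ∩ A)).toReal - (lam (S ∩ B)).toReal| ≤ (lam (symmDiff A B)).toReal := by
  have key : ∀ X Y : Set (ℕ → Bool),
      (lam (S ∩ X)).toReal - (lam (S ∩ Y)).toReal ≤ (lam (symmDiff X Y)).toReal := by
    intro X Y
    have hsub : S ∩ X ⊆ (S ∩ Y) ∪ symmDiff X Y := by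
      intro x ⟨hS, hX⟩
      by_cases hY : x ∈ Y
      · exact Or.inl ⟨hS, hY⟩
      · exact Or.inr (Set.mem_symmDiff.mpr (Or.inl ⟨hX, hY⟩))
    have h1 : lam (S ∩ X) ≤ lam (S ∩ Y) + lam (symmDiff X Y) :=
      le_trans (measure_mono hsub) (measure_union_le _ _)
    have h2 : (lam (S ∩ X)).toReal ≤ (lam (S ∩ Y)).toReal + (lam (symmDiff X Y)).toReal := by
      rw [← ENNReal.toReal_add (measure_ne_top _ _) (measure_ne_top _ _)]
      exact ENNReal.toReal_mono (by finiteness) h1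
    linarith
  rw [abs_sub_le_iff]
  refine ⟨key A B, ?_⟩
  have := key B A
  rwa [symmDiff_comm] at this

theorem BB_subset_AA
    (lam : Measure (ℕ → Bool)) [IsProbabilityMeasure lam]
    (hlam : ∀ (n : ℕ) (σ : Fin n → Bool), lam (cyl n σ) = (1 / 2 : ENNReal) ^ n) :
    ∀ A ∈ BB lam, Tendsto
      (fun n : ℕ => (n : ℝ) *
        ((lam (Sset n false ∩ A)).toReal - (lam (Sset n true ∩ A)).toReal))
      atTop (𝓝 0) := by
  intro A hA
  obtain ⟨hAm, hT⟩ := hA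
  have key : ∀ n : ℕ,
      |(lam (Sset n false ∩ A)).toReal - (lam (Sset n true ∩ A)).toReal|
        ≤ 2 * chi lam n A := by
    intro n
    set d := (lam (Sset n false ∩ A)).toReal - (lam (Sset n true ∩ A)).toReal with hd
    have hne : {r : ℝ | ∃ B ∈ FnAlg n, r = (lam (symmDiff A B)).toReal}.Nonempty :=
      ⟨(lam (symmDiff A ∅)).toReal, ∅, ⟨∅, by simp⟩, rfl⟩
    have hlow : |d| / 2 ≤ chi lam n A := by
      refine le_csInf hne ?_
      rintro r ⟨B, hB, rfl⟩
      have hBeq := measure_Sset_inter_eq lam hlam hB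
      have h0 := abs_measure_inter_diff_le lam (Sset n false) A B
      have h1 := abs_measure_inter_diff_le lam (Sset n true) A B
      have habs : |d| ≤ 2 * (lam (symmDiff A B)).toReal := by
        have : d = ((lam (Sset n false ∩ A)).toReal - (lam (Sset n false ∩ B)).toReal)
            - ((lam (Sset n true ∩ A)).toReal - (lam (Sset n true ∩ B)).toReal) := by
          rw [hd, hBeq]; ring
        rw [this]
        calc |_ - _| ≤ |(lam (Sset n false ∩ A)).toReal - (lam (Sset n false ∩ B)).toReal|
              + |(lam (Sset n true ∩ A)).toReal - (lam (Sset n true ∩ B)).toReal| :=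
            abs_sub _ _
          _ ≤ 2 * (lam (symmDiff A B)).toReal := by linarith
      linarith
    have := hlow
    unfold chi at this ⊢
    linarith
  refine squeeze_zero_norm (a := fun n : ℕ => 2 * ((n : ℝ) * chi lam n A)) ?_ ?_
  · intro n
    have h1 := key n
    have h2 : (0 : ℝ) ≤ (n : ℝ) := Nat.cast_nonneg n
    calc ‖(n : ℝ) * ((lam (Sset n false ∩ A)).toReal - (lam (Sset n true ∩ A)).toReal)‖
        = (n : ℝ) * |(lam (Sset n false ∩ A)).toReal - (lam (Sset n true ∩ A)).toReal| := by
          rw [Real.norm_eq_abs, abs_mul, abs_of_nonneg h2]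
      _ ≤ (n : ℝ) * (2 * chi lam n A) := mul_le_mul_of_nonneg_left h1 h2
      _ = 2 * ((n : ℝ) * chi lam n A) := by ring
  · have := hT.const_mul (2 : ℝ)
    simpa using this
end

section
/- Let (W_n)_{n∈ω} be a sequence of pairwise disjoint Borel subsets of 2^ω and (k_n)_{n∈ω} a strictly increasing sequence of positive natural numbers such that λ(W_n) ≤ 1/2^{k_n} for each n, and such that for every n > 0, every k ≥ k_n, and every i ≤ n we have k·χ_k(W_i) < 1/2^n. Then the union W = ∪_{n∈ω} W_n satisfies lim_{k→∞} k·χ_k(W) = 0. -/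
open MeasureTheory Filter Topology

lemma FnAlg_empty (n : ℕ) : (∅ : Set (ℕ → Bool)) ∈ FnAlg n := ⟨∅, by simp⟩

lemma FnAlg_iUnion {N n : ℕ} {B : Fin N → Set (ℕ → Bool)} (hB : ∀ i, B i ∈ FnAlg n) :
    (⋃ i, B i) ∈ FnAlg n := by
  choose S hS using hB
  exact ⟨⋃ i, S i, by simp only [Set.biUnion_iUnion]; exact Set.iUnion_congr hS⟩

lemma chi_bddBelow (lam : Measure (ℕ → Bool)) (n : ℕ) (A : Set (ℕ → Bool)) :
    BddBelow {r : ℝ | ∃ B ∈ FnAlg n, r = (lam (symmDiff A B)).toReal} :=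
  ⟨0, fun r ⟨B, _, hr⟩ => hr ▸ ENNReal.toReal_nonneg⟩

lemma chi_nonneg (lam : Measure (ℕ → Bool)) (n : ℕ) (A : Set (ℕ → Bool)) :
    0 ≤ chi lam n A :=
  Real.sInf_nonneg (fun r ⟨B, _, hr⟩ => hr ▸ ENNReal.toReal_nonneg)

lemma chi_le (lam : Measure (ℕ → Bool)) {n : ℕ} (A : Set (ℕ → Bool)) {B : Set (ℕ → Bool)}
    (hB : B ∈ FnAlg n) : chi lam n A ≤ (lam (symmDiff A B)).toReal :=
  csInf_le (chi_bddBelow lam n A) ⟨B, hB, rfl⟩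

lemma chi_lt {lam : Measure (ℕ → Bool)} {n : ℕ} {A : Set (ℕ → Bool)} {t : ℝ}
    (h : chi lam n A < t) : ∃ B ∈ FnAlg n, (lam (symmDiff A B)).toReal < t := by
  have hne : {r : ℝ | ∃ B ∈ FnAlg n, r = (lam (symmDiff A B)).toReal}.Nonempty :=
    ⟨(lam (symmDiff A ∅)).toReal, ∅, FnAlg_empty n, rfl⟩
  obtain ⟨r, hr, hrt⟩ := exists_lt_of_csInf_lt hne h
  obtain ⟨B, hB, rfl⟩ := hr
  exact ⟨B, hB, hrt⟩

lemma strictMono_add_le {k : ℕ → ℕ} (hk : StrictMono k) (a d : ℕ) : k a + d ≤ k (a + d) := by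
  induction d with
  | zero => simp
  | succ d ih =>
    have h2 := hk (Nat.lt_succ_self (a + d))
    rw [Nat.succ_eq_add_one] at h2
    have h3 : a + (d + 1) = a + d + 1 := rfl
    rw [h3]
    omega

lemma strictMono_le_self {k : ℕ → ℕ} (hk : StrictMono k) (a : ℕ) : a ≤ k a := by
  simpa using strictMono_add_le hk 0 a |>.trans' (by omega)

lemma key_bound
    (lam : Measure (ℕ → Bool)) [IsProbabilityMeasure lam]
    (W : ℕ → Set (ℕ → Bool))
    (k : ℕ → ℕ) (hkmono : StrictMono k) (hkpos : ∀ n, 0 < k n)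
    (hWsmall : ∀ n, lam (W n) ≤ (1 / 2 : ENNReal) ^ (k n))
    (happrox : ∀ n > 0, ∀ m ≥ k n, ∀ i ≤ n, (m : ℝ) * chi lam m (W i) < 1 / 2 ^ n)
    {n m : ℕ} (hn : 0 < n) (h1 : k n ≤ m) (h2 : m < k (n + 1)) :
    (m : ℝ) * chi lam m (⋃ j, W j) ≤ (n + 1) / 2 ^ n + m * (1 / 2) ^ m := by
  have hm0 : 0 < m := lt_of_lt_of_le (hkpos n) h1
  have hmR : (0 : ℝ) < m := by exact_mod_cast hm0
  -- choose good approximations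
  have hex : ∀ i : Fin (n + 1), ∃ B ∈ FnAlg m,
      (lam (symmDiff (W i) B)).toReal < 1 / 2 ^ n / m := by
    intro i
    have h := happrox n hn m h1 i (Nat.lt_succ_iff.1 i.isLt)
    have : chi lam m (W i) < 1 / 2 ^ n / m := by
      rw [lt_div_iff₀ hmR]
      linarith [h]
    exact chi_lt this
  choose B hBmem hBlt using hex
  have hBu : (⋃ i, B i) ∈ FnAlg m := FnAlg_iUnion hBmem
  -- set inclusion
  have hincl : symmDiff (⋃ j, W j) (⋃ i, B i) ⊆
      (⋃ i : Fin (n + 1), symmDiff (W i) (B i)) ∪ ⋃ d, W (n + 1 + d) := by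
    intro x hx
    rw [Set.mem_symmDiff] at hx
    rcases hx with ⟨hxW, hxB⟩ | ⟨hxB, hxW⟩
    · obtain ⟨j, hj⟩ := Set.mem_iUnion.1 hxW
      by_cases hjn : j ≤ n
      · refine Or.inl (Set.mem_iUnion.2 ⟨⟨j, by omega⟩, ?_⟩)
        exact Set.mem_symmDiff.2 (Or.inl ⟨hj, fun h => hxB (Set.mem_iUnion.2 ⟨⟨j, by omega⟩, h⟩)⟩)
      · refine Or.inr (Set.mem_iUnion.2 ⟨j - (n + 1), ?_⟩)
        rwa [show n + 1 + (j - (n + 1)) = j by omega]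
    · obtain ⟨i, hi⟩ := Set.mem_iUnion.1 hxB
      exact Or.inl (Set.mem_iUnion.2 ⟨i,
        Set.mem_symmDiff.2 (Or.inr ⟨hi, fun h => hxW (Set.mem_iUnion.2 ⟨(i : ℕ), h⟩)⟩)⟩)
  -- measure bound in ENNReal
  have htail : lam (⋃ d, W (n + 1 + d)) ≤ (1 / 2 : ENNReal) ^ m := by
    calc lam (⋃ d, W (n + 1 + d)) ≤ ∑' d, lam (W (n + 1 + d)) := measure_iUnion_le _
      _ ≤ ∑' d : ℕ, (1 / 2 : ENNReal) ^ (k (n + 1) + d) := by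
          refine ENNReal.tsum_le_tsum fun d => (hWsmall _).trans ?_
          exact pow_le_pow_of_le_one (by positivity) (by norm_num)
            (strictMono_add_le hkmono (n + 1) d)
      _ = (1 / 2 : ENNReal) ^ (k (n + 1)) * ∑' d : ℕ, (1 / 2 : ENNReal) ^ d := by
          rw [← ENNReal.tsum_mul_left]
          exact tsum_congr fun d => (pow_add _ _ _)
      _ = (1 / 2 : ENNReal) ^ (k (n + 1)) * 2 := by
          rw [ENNReal.tsum_geometric]; norm_num
      _ ≤ (1 / 2 : ENNReal) ^ (m + 1) * 2 :=
          mul_le_mul_left (pow_le_pow_of_le_one (by positivity) (by norm_num) h2) 2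
      _ = (1 / 2 : ENNReal) ^ m := by
          have h21 : (2⁻¹ * 2 : ENNReal) = 1 := ENNReal.inv_mul_cancel (by norm_num) (by norm_num)
          rw [pow_succ, mul_assoc, one_div, h21, mul_one]
  have hmeas : lam (symmDiff (⋃ j, W j) (⋃ i, B i)) ≤
      (∑ i : Fin (n + 1), lam (symmDiff (W i) (B i))) + (1 / 2 : ENNReal) ^ m := by
    calc lam (symmDiff (⋃ j, W j) (⋃ i, B i))
        ≤ lam ((⋃ i : Fin (n + 1), symmDiff (W i) (B i)) ∪ ⋃ d, W (n + 1 + d)) :=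
          measure_mono hincl
      _ ≤ lam (⋃ i : Fin (n + 1), symmDiff (W i) (B i)) + lam (⋃ d, W (n + 1 + d)) :=
          measure_union_le _ _
      _ ≤ (∑ i : Fin (n + 1), lam (symmDiff (W i) (B i))) + (1 / 2 : ENNReal) ^ m := by
          exact add_le_add (measure_iUnion_fintype_le _ _) htail
  -- pass to toReal
  have hfin : ∀ i : Fin (n + 1), lam (symmDiff (W i) (B i)) ≠ ⊤ := fun i => measure_ne_top _ _
  have hT : (∑ i : Fin (n + 1), lam (symmDiff (W i) (B i))) + (1 / 2 : ENNReal) ^ m ≠ ⊤ := by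
    refine ENNReal.add_ne_top.2 ⟨?_, ?_⟩
    · exact (ENNReal.sum_lt_top.2 fun i _ => (measure_lt_top _ _)).ne
    · exact (ENNReal.pow_ne_top (by norm_num))
  have hreal : (lam (symmDiff (⋃ j, W j) (⋃ i, B i))).toReal ≤
      (∑ i : Fin (n + 1), (lam (symmDiff (W i) (B i))).toReal) + (1 / 2 : ℝ) ^ m := by
    have := ENNReal.toReal_mono hT hmeas
    rwa [ENNReal.toReal_add (by exact (ENNReal.sum_lt_top.2 fun i _ => (measure_lt_top _ _)).ne)
      (ENNReal.pow_ne_top (by norm_num)), ENNReal.toReal_sum (fun i _ => hfin i),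
      (by simp : ((1 / 2 : ENNReal) ^ m).toReal = (1 / 2 : ℝ) ^ m)] at this
  -- sum bound
  have hsum : (∑ i : Fin (n + 1), (lam (symmDiff (W i) (B i))).toReal) ≤
      (n + 1) * (1 / 2 ^ n / m) := by
    have := Finset.sum_le_card_nsmul Finset.univ
      (fun i : Fin (n + 1) => (lam (symmDiff (W i) (B i))).toReal) (1 / 2 ^ n / m)
      (fun i _ => (hBlt i).le)
    simpa [nsmul_eq_mul] using this
  have hchile : chi lam m (⋃ j, W j) ≤ (lam (symmDiff (⋃ j, W j) (⋃ i, B i))).toReal :=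
    chi_le lam _ hBu
  calc (m : ℝ) * chi lam m (⋃ j, W j)
      ≤ m * ((∑ i : Fin (n + 1), (lam (symmDiff (W i) (B i))).toReal) + (1 / 2 : ℝ) ^ m) := by
        exact mul_le_mul_of_nonneg_left (hchile.trans hreal) hmR.le
    _ ≤ m * ((n + 1) * (1 / 2 ^ n / m) + (1 / 2 : ℝ) ^ m) := by
        exact mul_le_mul_of_nonneg_left (by linarith [hsum]) hmR.le
    _ = (n + 1) / 2 ^ n + m * (1 / 2) ^ m := by
        field_simp

theorem union_of_antichain_in_BB
    (lam : Measure (ℕ → Bool)) [IsProbabilityMeasure lam]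
    (hlam : ∀ (n : ℕ) (σ : Fin n → Bool), lam (cyl n σ) = (1 / 2 : ENNReal) ^ n)
    (W : ℕ → Set (ℕ → Bool))
    (hWmeas : ∀ n, MeasurableSet (W n))
    (hWdisj : ∀ i j, i ≠ j → W i ∩ W j = ∅)
    (k : ℕ → ℕ) (hkmono : StrictMono k) (hkpos : ∀ n, 0 < k n)
    (hWsmall : ∀ n, lam (W n) ≤ (1 / 2 : ENNReal) ^ (k n))
    (happrox : ∀ n > 0, ∀ m ≥ k n, ∀ i ≤ n,
      (m : ℝ) * chi lam m (W i) < 1 / 2 ^ n) :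
    Tendsto (fun m : ℕ => (m : ℝ) * chi lam m (⋃ n, W n)) atTop (𝓝 0) := by
  have hA : Tendsto (fun n : ℕ => ((n : ℝ) + 1) / 2 ^ n) atTop (𝓝 0) := by
    have h1 := tendsto_self_mul_const_pow_of_lt_one (r := (1 / 2 : ℝ)) (by norm_num) (by norm_num)
    have h2 := tendsto_pow_atTop_nhds_zero_of_lt_one (r := (1 / 2 : ℝ)) (by norm_num) (by norm_num)
    have h3 := h1.add h2
    rw [add_zero] at h3
    refine h3.congr fun n => ?_
    rw [one_div, inv_pow]
    field_simp
  have hB : Tendsto (fun m : ℕ => (m : ℝ) * (1 / 2) ^ m) atTop (𝓝 0) :=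
    tendsto_self_mul_const_pow_of_lt_one (by norm_num) (by norm_num)
  rw [Metric.tendsto_atTop]
  intro ε hε
  obtain ⟨N₁, hN₁⟩ := eventually_atTop.1 (hA.eventually (gt_mem_nhds (half_pos hε)))
  obtain ⟨N₂, hN₂⟩ := eventually_atTop.1 (hB.eventually (gt_mem_nhds (half_pos hε)))
  refine ⟨max (k (max N₁ 1)) N₂, fun m hm => ?_⟩
  set N₁' := max N₁ 1 with hN₁'
  have hkN : k N₁' ≤ m := le_trans (le_max_left _ _) hm
  have hN₁'m : N₁' ≤ m := le_trans (strictMono_le_self hkmono N₁') hkN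
  set n := Nat.findGreatest (fun j => k j ≤ m) m with hn
  have hn_ge : N₁' ≤ n := Nat.le_findGreatest (P := fun j => k j ≤ m) hN₁'m hkN
  have hn1 : 0 < n := lt_of_lt_of_le (by omega) hn_ge
  have hkn : k n ≤ m := Nat.findGreatest_spec (P := fun j => k j ≤ m) hN₁'m hkN
  have hm2 : m < k (n + 1) := by
    by_contra h
    push_neg at h
    have hle : n + 1 ≤ m := le_trans (strictMono_le_self hkmono (n + 1)) h
    have := Nat.le_findGreatest (P := fun j => k j ≤ m) hle h
    omega
  have key := key_bound lam W k hkmono hkpos hWsmall happrox hn1 hkn hm2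
  have h₁ : ((n : ℝ) + 1) / 2 ^ n < ε / 2 := hN₁ n (le_trans (le_max_left _ _) hn_ge)
  have h₂ : (m : ℝ) * (1 / 2) ^ m < ε / 2 := hN₂ m (le_trans (le_max_right _ _) hm)
  have hnonneg : 0 ≤ (m : ℝ) * chi lam m (⋃ j, W j) :=
    mul_nonneg (Nat.cast_nonneg m) (chi_nonneg lam m _)
  rw [Real.dist_eq, sub_zero, abs_of_nonneg hnonneg]
  calc (m : ℝ) * chi lam m (⋃ j, W j) ≤ ((n : ℝ) + 1) / 2 ^ n + m * (1 / 2) ^ m := key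
    _ < ε / 2 + ε / 2 := by linarith
    _ = ε := by ring
end

section
/- Let f : [Fin(ω₁,2)]^{<ω} → ℝ and for α ≤ ω₁ and F ∈ [Fin(α,2)]^{<ω} define the total variation |f|_α(F) = sup{|f(G)| + |f(H)| : G,H ∈ [Fin(α,2)]^{<ω}, [G]_α ∩ [H]_α = ∅, [G]_α ∪ [H]_α ⊆ [F]_α} (value in ℝ ∪ {∞}). Say |f|_{ω₁} is α-determined if |f|_{ω₁}(F) = |f↾[Fin(α,2)]^{<ω}|_α(F) for every F ∈ [Fin(α,2)]^{<ω}. Then the set D = {α < ω₁ : |f|_{ω₁} is α-determined} is a closed unbounded subset of ω₁. -/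
/-- The first uncountable ordinal `ω₁`. -/
noncomputable def omega1 : Ordinal := (Cardinal.aleph 1).ord

/-- `C` is a closed unbounded subset of `ω₁`. -/
def ClubIn (C : Set Ordinal) : Prop :=
  C ⊆ Set.Iio omega1 ∧
  (∀ a : Ordinal, 0 < a → a < omega1 →
    (∀ b < a, ∃ c ∈ C, b < c ∧ c < a) → a ∈ C) ∧
  (∀ a < omega1, ∃ c ∈ C, a < c)

/-- `Fin(β,2)`: finite partial functions from ordinals below `β` to `2`. -/
def PFin (β : Ordinal) : Set (Ordinal → Option Bool) :=
  {f | {o | f o ≠ none}.Finite ∧ ∀ o, f o ≠ none → o < β}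

/-- The cylinder determined by a finite partial function `σ`. -/
def cylPt (σ : Ordinal → Option Bool) : Set (Ordinal → Bool) :=
  {x | ∀ o b, σ o = some b → x o = b}

/-- `[F] = ∪_{σ ∈ F} [σ]` for a family `F` of finite partial functions. -/
def cylF (F : Set (Ordinal → Option Bool)) : Set (Ordinal → Bool) :=
  ⋃ σ ∈ F, cylPt σ

/-- The total variation `|f|_α(F)`, with values in `ℝ ∪ {±∞}`. -/
noncomputable def tvar (f : Set (Ordinal → Option Bool) → ℝ) (α : Ordinal)
    (F : Set (Ordinal → Option Bool)) : EReal :=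
  sSup {r : EReal | ∃ G H : Set (Ordinal → Option Bool),
    G.Finite ∧ H.Finite ∧ G ⊆ PFin α ∧ H ⊆ PFin α ∧
    cylF G ∩ cylF H = ∅ ∧ cylF G ∪ cylF H ⊆ cylF F ∧
    r = ((|f G| + |f H| : ℝ) : EReal)}

/-- `|f|_{ω₁}` is `α`-determined. -/
def Determined (f : Set (Ordinal → Option Bool) → ℝ) (α : Ordinal) : Prop :=
  ∀ F : Set (Ordinal → Option Bool), F.Finite → F ⊆ PFin α →
    tvar f omega1 F = tvar f α F

lemma omega1_isLimit : Order.IsSuccLimit omega1 :=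
  Cardinal.isSuccLimit_ord (Cardinal.aleph0_le_aleph 1)

lemma add_one_lt_omega1 {a : Ordinal} (h : a < omega1) : a + 1 < omega1 := by
  rw [Ordinal.add_one_eq_succ]
  exact omega1_isLimit.succ_lt h

lemma iSup_lt_omega1 (u : ℕ → Ordinal) (h : ∀ n, u n < omega1) : (⨆ n, u n) < omega1 := by
  apply Ordinal.iSup_lt_ord_lift _ h
  rw [show omega1.cof = Cardinal.aleph 1 from Cardinal.isRegular_aleph_one.cof_eq]
  simpa using Cardinal.aleph0_lt_aleph_one

lemma exists_ub_of_finite {s : Set Ordinal} (hs : s.Finite) {c : Ordinal} (h0 : 0 < c)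
    (h : ∀ x ∈ s, x < c) : ∃ b, b < c ∧ ∀ x ∈ s, x ≤ b := by
  rcases s.eq_empty_or_nonempty with rfl | hne
  · exact ⟨0, h0, by simp⟩
  · exact ⟨sSup s, h _ (hne.csSup_mem hs), fun x hx => le_csSup hs.bddAbove hx⟩

lemma pfin_mono {β γ : Ordinal} (h : β ≤ γ) : PFin β ⊆ PFin γ :=
  fun σ hσ => ⟨hσ.1, fun o ho => lt_of_lt_of_le (hσ.2 o ho) h⟩

lemma tvar_mono (f : Set (Ordinal → Option Bool) → ℝ) {β γ : Ordinal} (h : β ≤ γ)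
    (F : Set (Ordinal → Option Bool)) : tvar f β F ≤ tvar f γ F := by
  apply sSup_le_sSup
  rintro r ⟨G, H, hGf, hHf, hG, hH, hd, hu, rfl⟩
  exact ⟨G, H, hGf, hHf, hG.trans (pfin_mono h), hH.trans (pfin_mono h), hd, hu, rfl⟩

lemma supp_finite {F : Set (Ordinal → Option Bool)} (hF : F.Finite) {β : Ordinal}
    (h : F ⊆ PFin β) : (⋃ σ ∈ F, {o | σ o ≠ none}).Finite :=
  hF.biUnion fun σ hσ => (h hσ).1

lemma supp_lt {F : Set (Ordinal → Option Bool)} {β : Ordinal} (h : F ⊆ PFin β) :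
    ∀ x ∈ ⋃ σ ∈ F, {o | σ o ≠ none}, x < β := by
  intro x hx
  rcases Set.mem_iUnion₂.1 hx with ⟨σ, hσ, hxσ⟩
  exact (h hσ).2 x hxσ

lemma pfin_of_supp_le {F : Set (Ordinal → Option Bool)} {β γ : Ordinal} (h : F ⊆ PFin β)
    {b : Ordinal} (hub : ∀ x ∈ ⋃ σ ∈ F, {o | σ o ≠ none}, x ≤ b) (hb : b < γ) :
    F ⊆ PFin γ := by
  intro σ hσ
  refine ⟨(h hσ).1, fun o ho => ?_⟩
  exact lt_of_le_of_lt (hub o (Set.mem_iUnion₂.2 ⟨σ, hσ, ho⟩)) hb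

lemma exists_pfin_lt {G : Set (Ordinal → Option Bool)} (hG : G.Finite)
    (h : G ⊆ PFin omega1) : ∃ γ, γ < omega1 ∧ G ⊆ PFin γ := by
  obtain ⟨b, hb, hub⟩ :=
    exists_ub_of_finite (supp_finite hG h) omega1_isLimit.pos (supp_lt h)
  exact ⟨b + 1, add_one_lt_omega1 hb, pfin_of_supp_le h hub (lt_add_one b)⟩

lemma countable_pfin {β : Ordinal} (hβ : β < omega1) : (PFin β).Countable := by
  have hIio : (Set.Iio β).Countable := by
    rw [← Cardinal.le_aleph0_iff_set_countable, Ordinal.mk_Iio_ordinal,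
      Cardinal.lift_le_aleph0]
    have := Cardinal.lt_ord.1 hβ
    rwa [← Cardinal.succ_aleph0, Order.lt_succ_iff] at this
  have hcnt : ((Set.Iio β) ×ˢ (Set.univ : Set Bool)).Countable :=
    hIio.prod Set.countable_univ
  have hinj : Function.Injective
      (fun σ : Ordinal → Option Bool => {p : Ordinal × Bool | σ p.1 = some p.2}) := by
    intro σ τ hστ
    funext o
    have key : ∀ b, σ o = some b ↔ τ o = some b := fun b =>
      ⟨fun hb => (Set.ext_iff.1 hστ (o, b)).1 hb, fun hb => (Set.ext_iff.1 hστ (o, b)).2 hb⟩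
    cases hσ : σ o with
    | some b => exact ((key b).1 hσ).symm
    | none =>
      cases hτ : τ o with
      | none => rfl
      | some b =>
        have := (key b).2 hτ
        rw [hσ] at this
        exact absurd this (by simp)
  apply Set.Countable.mono _ ((Set.countable_setOf_finite_subset hcnt).preimage hinj)
  intro σ hσ
  constructor
  · apply Set.Finite.subset ((hσ.1).prod (Set.finite_univ))
    rintro ⟨o, b⟩ hp
    exact ⟨by simp [Set.mem_setOf_eq] at hp ⊢; simp [hp], Set.mem_univ b⟩
  · rintro ⟨o, b⟩ hp
    exact ⟨hσ.2 o (by simp [Set.mem_setOf_eq] at hp; simp [hp]), Set.mem_univ b⟩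

lemma exists_tvar_bound (f : Set (Ordinal → Option Bool) → ℝ)
    (F : Set (Ordinal → Option Bool)) :
    ∃ γ, γ < omega1 ∧ tvar f omega1 F ≤ tvar f γ F := by
  have hq : ∀ q : ℚ, ∃ γ, γ < omega1 ∧
      (((q : ℝ) : EReal) < tvar f omega1 F → ((q : ℝ) : EReal) < tvar f γ F) := by
    intro q
    by_cases hlt : ((q : ℝ) : EReal) < tvar f omega1 F
    · obtain ⟨r, hr, hqr⟩ := lt_sSup_iff.1 hlt
      obtain ⟨G, H, hGf, hHf, hG, hH, hd, hu, rfl⟩ := hr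
      obtain ⟨γ₁, hγ₁, hGγ⟩ := exists_pfin_lt hGf hG
      obtain ⟨γ₂, hγ₂, hHγ⟩ := exists_pfin_lt hHf hH
      refine ⟨max γ₁ γ₂, max_lt hγ₁ hγ₂, fun _ => lt_of_lt_of_le hqr ?_⟩
      exact le_sSup ⟨G, H, hGf, hHf, hGγ.trans (pfin_mono (le_max_left _ _)),
        hHγ.trans (pfin_mono (le_max_right _ _)), hd, hu, rfl⟩
    · exact ⟨0, omega1_isLimit.pos, fun h => absurd h hlt⟩
  choose g hg1 hg2 using hq
  set e : ℕ ≃ ℚ := (Denumerable.eqv ℚ).symm with he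
  refine ⟨⨆ n, g (e n), iSup_lt_omega1 _ fun n => hg1 _, ?_⟩
  refine le_of_forall_lt fun t ht => ?_
  obtain ⟨q, htq, hq2⟩ := EReal.exists_rat_btwn_of_lt ht
  have hle : g q ≤ ⨆ n, g (e n) := by
    have := le_ciSup (Ordinal.bddAbove_range fun n => g (e n)) (e.symm q)
    simpa using this
  exact lt_of_lt_of_le (lt_of_lt_of_le htq (hg2 q hq2).le) (tvar_mono f hle F)

lemma exists_level (f : Set (Ordinal → Option Bool) → ℝ) {β : Ordinal} (hβ : β < omega1) :
    ∃ γ, γ < omega1 ∧ β < γ ∧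
      ∀ F : Set (Ordinal → Option Bool), F.Finite → F ⊆ PFin β →
        tvar f omega1 F ≤ tvar f γ F := by
  have hcnt : ({F | Set.Finite F ∧ F ⊆ PFin β} :
      Set (Set (Ordinal → Option Bool))).Countable :=
    Set.countable_setOf_finite_subset (countable_pfin hβ)
  have hne : ({F | Set.Finite F ∧ F ⊆ PFin β} :
      Set (Set (Ordinal → Option Bool))).Nonempty :=
    ⟨∅, Set.finite_empty, Set.empty_subset _⟩
  obtain ⟨e, he⟩ := hcnt.exists_eq_range hne
  choose g hg1 hg2 using exists_tvar_bound f
  refine ⟨max (β + 1) (⨆ n, g (e n)),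
    max_lt (add_one_lt_omega1 hβ) (iSup_lt_omega1 _ fun n => hg1 _),
    lt_of_lt_of_le (lt_add_one β) (le_max_left _ _), ?_⟩
  intro F hF hFβ
  have hFmem : F ∈ Set.range e := by rw [← he]; exact ⟨hF, hFβ⟩
  obtain ⟨n, rfl⟩ := hFmem
  refine (hg2 (e n)).trans (tvar_mono f ?_ _)
  exact le_trans (le_ciSup (Ordinal.bddAbove_range fun n => g (e n)) n) (le_max_right _ _)

theorem club_of_determined (f : Set (Ordinal → Option Bool) → ℝ) :
    ClubIn {α | α < omega1 ∧ Determined f α} := by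
  refine ⟨fun α hα => hα.1, ?_, ?_⟩
  · -- closedness
    rintro a ha0 haω hlim
    refine ⟨haω, fun F hF hFa => ?_⟩
    obtain ⟨b, hb, hub⟩ := exists_ub_of_finite (supp_finite hF hFa) ha0 (supp_lt hFa)
    obtain ⟨c, hc, hbc, hca⟩ := hlim b hb
    have hFc : F ⊆ PFin c := pfin_of_supp_le hFa hub hbc
    refine le_antisymm ?_ (tvar_mono f haω.le F)
    calc tvar f omega1 F = tvar f c F := hc.2 F hF hFc
      _ ≤ tvar f a F := tvar_mono f hca.le F
  · -- unboundedness
    intro a ha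
    have hstep : ∀ β : Ordinal, β < omega1 → ∃ γ, γ < omega1 ∧ β < γ ∧
        ∀ F : Set (Ordinal → Option Bool), F.Finite → F ⊆ PFin β →
          tvar f omega1 F ≤ tvar f γ F := fun β hβ => exists_level f hβ
    classical
    choose! g hg1 hg2 hg3 using hstep
    set u : ℕ → Ordinal := fun n => g^[n] (a + 1) with hu
    have hstep' : ∀ n, u (n + 1) = g (u n) := fun n => Function.iterate_succ_apply' g n (a + 1)
    have hult : ∀ n, u n < omega1 := by
      intro n
      induction n with
      | zero => exact add_one_lt_omega1 ha
      | succ n ih => rw [hstep' n]; exact hg1 _ ih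
    set α := ⨆ n, u n with hα
    have hαlt : α < omega1 := iSup_lt_omega1 u hult
    have hua : ∀ n, u n ≤ α := fun n => le_ciSup (Ordinal.bddAbove_range u) n
    have hαpos : 0 < α := lt_of_lt_of_le (lt_of_le_of_lt (zero_le (a := a)) (lt_add_one a)) (hua 0)
    refine ⟨α, ⟨hαlt, ?_⟩, lt_of_lt_of_le (lt_add_one a) (hua 0)⟩
    intro F hF hFα
    refine le_antisymm ?_ (tvar_mono f hαlt.le F)
    obtain ⟨b, hbα, hub⟩ := exists_ub_of_finite (supp_finite hF hFα) hαpos (supp_lt hFα)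
    obtain ⟨n, hn⟩ := (lt_ciSup_iff (Ordinal.bddAbove_range u)).1 hbα
    have hFu : F ⊆ PFin (u n) := pfin_of_supp_le hFα hub hn
    calc tvar f omega1 F ≤ tvar f (g (u n)) F := hg3 _ (hult n) F hF hFu
      _ = tvar f (u (n + 1)) F := by rw [hstep' n]
      _ ≤ tvar f α F := tvar_mono f (hua (n + 1)) F
end

section
/- Let A be an infinite Boolean algebra with Stone space St(A), μ a bounded finitely additive measure on A with Radon extension μ̂ on St(A), and (B_n)_{n∈ω} an antichain in A. Let (A_ζ)_{ζ<ω₁} be an almost disjoint family of infinite subsets of ω. For each ζ < ω₁ and i ∈ A_ζ let C_i^ζ ∈ A satisfy C_i^ζ ≤ B_i, and assume the supremum S_ζ = ⋁{C_i^ζ : i ∈ A_ζ} exists in A. Then there exists η < ω₁ such that for every ζ ∈ [η, ω₁), the boundary in St(A) of the open set ∪_{i∈A_ζ} C_i^ζ (clopen sets viewed as subsets of St(A)) is |μ̂|-null. -/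
open MeasureTheory TopologicalSpace

theorem boundaries_eventually_null
    {K : Type} [TopologicalSpace K] [CompactSpace K] [T2Space K]
    [TotallyDisconnectedSpace K] [Infinite K]
    [MeasurableSpace K] [BorelSpace K]
    -- a bounded finitely additive measure `μ` on the algebra of clopen sets
    (μ : Clopens K → ℝ)
    (hadd : ∀ U V : Clopens K, U ⊓ V = ⊥ → μ (U ⊔ V) = μ U + μ V)
    (hbdd : ∃ M : ℝ, ∀ U V : Clopens K, U ⊓ V = ⊥ → |μ U| + |μ V| ≤ M)
    -- its Radon extension `μ̂`, a regular signed Borel measure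
    (mhat : SignedMeasure K)
    (hreg : mhat.totalVariation.Regular)
    (hext : ∀ U : Clopens K, mhat (U : Set K) = μ U)
    -- an antichain in the algebra of clopen sets
    (B : ℕ → Clopens K)
    (hB : ∀ i j, i ≠ j → B i ⊓ B j = ⊥)
    -- an almost disjoint family of infinite subsets of ω indexed by ζ < ω₁
    (A : Ordinal → Set ℕ)
    (hAinf : ∀ ζ < omega1, (A ζ).Infinite)
    (hAD : ∀ ζ < omega1, ∀ ξ < omega1, ζ ≠ ξ → (A ζ ∩ A ξ).Finite)
    -- clopens `C ζ i ≤ B i` whose suprema exist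
    (C : Ordinal → ℕ → Clopens K)
    (hC : ∀ ζ < omega1, ∀ i ∈ A ζ, C ζ i ≤ B i)
    (hsup : ∀ ζ < omega1, ∃ S : Clopens K, IsLUB {V | ∃ i ∈ A ζ, C ζ i = V} S) :
    ∃ η < omega1, ∀ ζ, η ≤ ζ → ζ < omega1 →
      mhat.totalVariation (frontier (⋃ i ∈ A ζ, (C ζ i : Set K))) = 0 := by
  classical
  set U : Ordinal → Set K := fun ζ => ⋃ i ∈ A ζ, (C ζ i : Set K) with hU
  have hUopen : ∀ ζ, IsOpen (U ζ) :=
    fun ζ => isOpen_biUnion fun i _ => (C ζ i).isClopen.isOpen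
  have hBdisj : ∀ j i, j ≠ i → ((B j : Clopens K) : Set K) ∩ ((B i : Clopens K) : Set K) = ∅ := by
    intro j i hji
    have : ((B j ⊓ B i : Clopens K) : Set K) = ((⊥ : Clopens K) : Set K) := by rw [hB j i hji]
    simpa using this
  -- the frontier of `U ζ` misses every `B i`
  have hDB : ∀ ζ, ζ < omega1 → ∀ i, frontier (U ζ) ∩ (B i : Set K) = ∅ := by
    intro ζ hζ i
    by_cases hi : i ∈ A ζ
    · have hUB : U ζ ∩ (B i : Set K) = (C ζ i : Set K) := by
        apply Set.Subset.antisymm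
        · rintro x ⟨hxU, hxB⟩
          obtain ⟨j, hj, hx⟩ := Set.mem_iUnion₂.1 hxU
          rcases eq_or_ne j i with rfl | hji
          · exact hx
          · exact absurd ⟨hC ζ hζ j hj hx, hxB⟩
              (Set.eq_empty_iff_forall_notMem.1 (hBdisj j i hji) x)
        · intro x hx
          exact ⟨Set.mem_biUnion hi hx, hC ζ hζ i hi hx⟩
      apply Set.eq_empty_iff_forall_notMem.2
      rintro x ⟨hxF, hxB⟩
      have hx1 : x ∈ closure (U ζ) := frontier_subset_closure hxF
      have hx2 : x ∈ closure (U ζ ∩ (B i : Set K)) :=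
        (B i).isClopen.isOpen.closure_inter ⟨hx1, hxB⟩
      rw [hUB, (C ζ i).isClopen.isClosed.closure_eq] at hx2
      have hxint : x ∈ interior (U ζ) := by
        rw [(hUopen ζ).interior_eq]
        exact Set.mem_biUnion hi hx2
      exact hxF.2 hxint
    · have hUB : U ζ ∩ (B i : Set K) = ∅ := by
        apply Set.eq_empty_iff_forall_notMem.2
        rintro x ⟨hxU, hxB⟩
        obtain ⟨j, hj, hx⟩ := Set.mem_iUnion₂.1 hxU
        have hji : j ≠ i := fun h => hi (h ▸ hj)
        exact Set.eq_empty_iff_forall_notMem.1 (hBdisj j i hji) x ⟨hC ζ hζ j hj hx, hxB⟩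
      apply Set.eq_empty_iff_forall_notMem.2
      rintro x ⟨hxF, hxB⟩
      have hx2 : x ∈ closure (U ζ ∩ (B i : Set K)) :=
        (B i).isClopen.isOpen.closure_inter ⟨frontier_subset_closure hxF, hxB⟩
      rw [hUB, closure_empty] at hx2
      exact hx2
  -- the sup `S ξ` is disjoint from `B i` for `i ∉ A ξ`
  have hSdisj : ∀ ξ, (hξ : ξ < omega1) → ∀ i ∉ A ξ,
      ((hsup ξ hξ).choose : Clopens K) ⊓ B i = ⊥ := by
    intro ξ hξ i hi
    set S := (hsup ξ hξ).choose with hS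
    have hlub := (hsup ξ hξ).choose_spec
    have hub : S \ B i ∈ upperBounds {V | ∃ j ∈ A ξ, C ξ j = V} := by
      rintro V ⟨j, hj, rfl⟩
      have hji : j ≠ i := fun h => hi (h ▸ hj)
      refine le_sdiff.2 ⟨hlub.1 ⟨j, hj, rfl⟩, ?_⟩
      exact disjoint_iff.2 (le_bot_iff.1 ((hB j i hji) ▸ inf_le_inf_right _ (hC ξ hξ j hj)))
    have hle : S ≤ S \ B i := hlub.2 hub
    exact disjoint_iff.1 (disjoint_sdiff_self_left.mono_left hle)
  -- frontiers are pairwise disjoint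
  have key : ∀ ζ, ζ < omega1 → ∀ ξ, ξ < omega1 → ζ ≠ ξ →
      frontier (U ζ) ∩ frontier (U ξ) = ∅ := by
    intro ζ hζ ξ hξ hne
    set S := (hsup ξ hξ).choose with hSdef
    have hlub := (hsup ξ hξ).choose_spec
    have hUSξ : U ξ ⊆ (S : Set K) := by
      refine Set.iUnion₂_subset fun i hi => ?_
      exact hlub.1 ⟨i, hi, rfl⟩
    have hfrUξ : frontier (U ξ) ⊆ (S : Set K) :=
      frontier_subset_closure.trans (closure_minimal hUSξ S.isClopen.isClosed)
    apply Set.eq_empty_iff_forall_notMem.2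
    rintro x ⟨hx1, hx2⟩
    have hxS : x ∈ (S : Set K) := hfrUξ hx2
    have hxcl : x ∈ closure (U ζ ∩ (S : Set K)) :=
      S.isClopen.isOpen.closure_inter ⟨frontier_subset_closure hx1, hxS⟩
    have hsub : U ζ ∩ (S : Set K) ⊆ ⋃ i ∈ (A ζ ∩ A ξ), (B i : Set K) := by
      rintro y ⟨hyU, hyS⟩
      obtain ⟨j, hj, hy⟩ := Set.mem_iUnion₂.1 hyU
      have hjξ : j ∈ A ξ := by
        by_contra hjξ
        have hd := hSdisj ξ hξ j hjξ
        have hds : ((S ⊓ B j : Clopens K) : Set K) = ((⊥ : Clopens K) : Set K) := by rw [hd]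
        simp only [Clopens.coe_inf, Clopens.coe_bot] at hds
        exact Set.eq_empty_iff_forall_notMem.1 hds y ⟨hyS, hC ζ hζ j hj hy⟩
      exact Set.mem_biUnion ⟨hj, hjξ⟩ (hC ζ hζ j hj hy)
    have hclosed : IsClosed (⋃ i ∈ (A ζ ∩ A ξ), (B i : Set K)) :=
      (hAD ζ hζ ξ hξ hne).isClosed_biUnion fun i _ => (B i).isClopen.isClosed
    have hxB : x ∈ ⋃ i ∈ (A ζ ∩ A ξ), (B i : Set K) :=
      (closure_minimal hsub hclosed) hxcl
    obtain ⟨i, _, hxBi⟩ := Set.mem_iUnion₂.1 hxB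
    exact Set.eq_empty_iff_forall_notMem.1 (hDB ζ hζ i) x ⟨hx1, hxBi⟩
  -- measure-theoretic part
  haveI : IsFiniteMeasure mhat.totalVariation := by
    unfold SignedMeasure.totalVariation; infer_instance
  set T := mhat.totalVariation with hT
  set As : {p : Ordinal // p < omega1} → Set K := fun p => frontier (U p.1) with hAs
  have hmble : ∀ p, MeasurableSet (As p) := fun p => isClosed_frontier.measurableSet
  have hdisj : Pairwise (Function.onFun Disjoint As) := by
    intro p q hpq
    have : p.1 ≠ q.1 := fun h => hpq (Subtype.ext h)
    exact Set.disjoint_iff_inter_eq_empty.2 (key p.1 p.2 q.1 q.2 this)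
  have hcount : Set.Countable {p | 0 < T (As p)} :=
    Measure.countable_meas_pos_of_disjoint_iUnion hmble hdisj
  have hcount' : Set.Countable (insert (0 : Ordinal)
      (Subtype.val '' {p | 0 < T (As p)})) :=
    (hcount.image _).insert 0
  obtain ⟨f, hf⟩ := Set.Countable.exists_eq_range hcount' (Set.insert_nonempty _ _)
  have hflt : ∀ n, f n < omega1 := by
    intro n
    have : f n ∈ insert (0 : Ordinal) (Subtype.val '' {p | 0 < T (As p)}) := by
      rw [hf]; exact Set.mem_range_self n
    rcases this with h | h
    · rw [h]
      exact Cardinal.isSuccLimit_ord (le_of_lt Cardinal.aleph0_lt_aleph_one) |>.pos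
    · obtain ⟨p, _, hp⟩ := h
      rw [← hp]; exact p.2
  have hlim : Order.IsSuccLimit omega1 :=
    Cardinal.isSuccLimit_ord (le_of_lt Cardinal.aleph0_lt_aleph_one)
  refine ⟨(⨆ n, Order.succ (f n)), ?_, ?_⟩
  · apply Ordinal.iSup_lt_ord_lift
    · rw [show omega1 = (Cardinal.aleph 1).ord from rfl,
        Cardinal.isRegular_aleph_one.cof_eq, Cardinal.mk_nat, Cardinal.lift_aleph0]
      exact Cardinal.aleph0_lt_aleph_one
    · exact fun n => hlim.succ_lt (hflt n)
  · intro ζ hη hζ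
    by_contra hne0
    have hpos : 0 < T (As ⟨ζ, hζ⟩) := by
      simpa [hAs, hU] using pos_iff_ne_zero.2 hne0
    have hmem : ζ ∈ insert (0 : Ordinal) (Subtype.val '' {p | 0 < T (As p)}) :=
      Set.mem_insert_of_mem _ ⟨⟨ζ, hζ⟩, hpos, rfl⟩
    rw [hf] at hmem
    obtain ⟨n, hn⟩ := hmem
    have : Order.succ ζ ≤ (⨆ n, Order.succ (f n)) := by
      rw [← hn] at *
      exact Ordinal.le_iSup (fun n => Order.succ (f n)) n
    exact absurd (lt_of_lt_of_le (Order.lt_succ ζ) (this.trans hη)) (lt_irrefl ζ)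
end

section
/- Let A be a Boolean algebra, (V_n)_{n∈ω} an antichain in A whose corresponding clopen sets converge in St(A) to an ultrafilter t, A ⊆ ω infinite co-infinite, and C ⊇ A a Boolean algebra in which V = ⋁_{n∈A}V_n exists. Let B be the subalgebra of C generated by A ∪ {V}. Then B is a minimal extension of A (there is no subalgebra strictly between A and B), and t is the unique ultrafilter on A that extends to two distinct ultrafilters on B. -/
open Filter symmDiff

/-- A Boolean subalgebra of `C`, as a set closed under the operations. -/
def IsSubalg {C : Type*} [BooleanAlgebra C] (S : Set C) : Prop :=
  ⊥ ∈ S ∧ (∀ a ∈ S, aᶜ ∈ S) ∧ (∀ a ∈ S, ∀ b ∈ S, a ⊔ b ∈ S)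

/-- An ultrafilter on the subalgebra `S`. -/
def IsUltraOn {C : Type*} [BooleanAlgebra C] (S : Set C) (u : Set C) : Prop :=
  u ⊆ S ∧ (∀ a ∈ u, ∀ b ∈ S, a ≤ b → b ∈ u) ∧
  (∀ a ∈ u, ∀ b ∈ u, a ⊓ b ∈ u) ∧ (∀ a ∈ S, a ∈ u ↔ aᶜ ∉ u)

section aux

variable {C : Type*} [BooleanAlgebra C] {S : Set C}

lemma IsSubalg.top_mem (h : IsSubalg S) : ⊤ ∈ S := by
  have := h.2.1 ⊥ h.1; simpa using this

lemma IsSubalg.inf_mem (h : IsSubalg S) {a b : C} (ha : a ∈ S) (hb : b ∈ S) :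
    a ⊓ b ∈ S := by
  have := h.2.1 _ (h.2.2 _ (h.2.1 a ha) _ (h.2.1 b hb))
  simpa using this

lemma IsSubalg.symmDiff_mem (h : IsSubalg S) {a b : C} (ha : a ∈ S) (hb : b ∈ S) :
    a ∆ b ∈ S := by
  rw [symmDiff_def, sdiff_eq, sdiff_eq]
  exact h.2.2 _ (h.inf_mem ha (h.2.1 b hb)) _ (h.inf_mem hb (h.2.1 a ha))

lemma IsSubalg.finsetSup_mem (h : IsSubalg S) (T : Finset ℕ) (f : ℕ → C)
    (hf : ∀ n ∈ T, f n ∈ S) : T.sup f ∈ S :=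
  Finset.sup_induction h.1 (fun a ha b hb => h.2.2 a ha b hb) hf

/-- If `x ⊓ v = a ⊓ v` then `xᶜ ⊓ v = aᶜ ⊓ v`. -/
lemma compl_part {x a v : C} (hxa : x ⊓ v = a ⊓ v) : xᶜ ⊓ v = aᶜ ⊓ v := by
  have key : ∀ y : C, yᶜ ⊓ v = (y ⊓ v)ᶜ ⊓ v := by
    intro y
    rw [compl_inf, inf_sup_right]
    simp
  rw [key x, hxa, ← key a]

lemma split_eq (x v : C) : (x ⊓ v) ⊔ (x ⊓ vᶜ) = x := by
  rw [← inf_sup_left, sup_compl_eq_top, inf_top_eq]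

end aux

theorem minimal_extension_by_supremum_of_antichain
    {C : Type*} [BooleanAlgebra C]
    (𝒜 : Set C) (h𝒜 : IsSubalg 𝒜)
    -- an antichain in 𝒜
    (V : ℕ → C) (hVmem : ∀ n, V n ∈ 𝒜) (hVne : ∀ n, V n ≠ ⊥)
    (hVdisj : ∀ i j, i ≠ j → V i ⊓ V j = ⊥)
    -- the antichain converges to the ultrafilter t in St(𝒜): every clopen
    -- neighbourhood of t (i.e. every element of t) contains almost all V n
    (t : Set C) (ht : IsUltraOn 𝒜 t)
    (hconv : ∀ a ∈ t, ∀ᶠ n in atTop, V n ≤ a)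
    -- an infinite co-infinite set of indices
    (s : Set ℕ) (hs : s.Infinite) (hscoinf : sᶜ.Infinite)
    -- the supremum V = ⋁_{n ∈ s} V n exists in C
    (Vsup : C) (hVsup : IsLUB {x | ∃ n ∈ s, V n = x} Vsup)
    -- ℬ is the subalgebra of C generated by 𝒜 ∪ {Vsup}
    (ℬ : Set C) (hℬ : IsSubalg ℬ) (hgen₁ : 𝒜 ∪ {Vsup} ⊆ ℬ)
    (hgen₂ : ∀ D : Set C, IsSubalg D → 𝒜 ∪ {Vsup} ⊆ D → ℬ ⊆ D) :
    -- ℬ is a minimal extension of 𝒜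
    (𝒜 ⊂ ℬ ∧ ∀ D : Set C, IsSubalg D → 𝒜 ⊆ D → D ⊆ ℬ → D = 𝒜 ∨ D = ℬ) ∧
    -- t is the unique ultrafilter on 𝒜 with two distinct extensions to ℬ
    (∀ u : Set C, IsUltraOn 𝒜 u →
      ((∃ w₁ w₂ : Set C, IsUltraOn ℬ w₁ ∧ IsUltraOn ℬ w₂ ∧ w₁ ≠ w₂ ∧
        w₁ ∩ 𝒜 = u ∧ w₂ ∩ 𝒜 = u) ↔ u = t)) := by
  classical
  obtain ⟨htsub, htup, htinf, htultra⟩ := ht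
  -- basic facts about t
  have hbot_t : ⊥ ∉ t := by
    intro hb
    have htop : ⊤ ∈ t := htup ⊥ hb ⊤ h𝒜.top_mem le_top
    have := (htultra ⊤ h𝒜.top_mem).mp htop
    simp only [compl_top] at this
    exact this hb
  have htop_t : ⊤ ∈ t := by
    refine (htultra ⊤ h𝒜.top_mem).mpr ?_
    simpa using hbot_t
  have hcompl_t : ∀ c ∈ 𝒜, c ∉ t → cᶜ ∈ t := by
    intro c hc hct
    by_contra h
    exact hct ((htultra c hc).mpr h)
  -- Vsup facts
  have hVle : ∀ n ∈ s, V n ≤ Vsup := fun n hn => hVsup.1 ⟨n, hn, rfl⟩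
  have hVout : ∀ m, m ∉ s → V m ≤ Vsupᶜ := by
    intro m hm
    have h1 : Vsup ≤ (V m)ᶜ := by
      apply hVsup.2
      rintro x ⟨n, hn, rfl⟩
      exact le_compl_iff_disjoint_right.mpr
        (disjoint_iff.mpr (hVdisj n m (fun h => hm (h ▸ hn))))
    calc V m = (V m)ᶜᶜ := (compl_compl _).symm
    _ ≤ Vsupᶜ := compl_le_compl h1
  -- every element of t meets both Vsup and Vsupᶜ
  have hmeet₁ : ∀ a ∈ t, a ⊓ Vsup ≠ ⊥ := by
    intro a hat h
    obtain ⟨N, hN⟩ := eventually_atTop.mp (hconv a hat)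
    obtain ⟨n, hn, hNn⟩ := hs.exists_gt N
    have : V n ≤ a ⊓ Vsup := le_inf (hN n hNn.le) (hVle n hn)
    exact hVne n (le_bot_iff.mp (h ▸ this))
  have hmeet₂ : ∀ a ∈ t, a ⊓ Vsupᶜ ≠ ⊥ := by
    intro a hat h
    obtain ⟨N, hN⟩ := eventually_atTop.mp (hconv a hat)
    obtain ⟨n, hn, hNn⟩ := hscoinf.exists_gt N
    have : V n ≤ a ⊓ Vsupᶜ := le_inf (hN n hNn.le) (hVout n hn)
    exact hVne n (le_bot_iff.mp (h ▸ this))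
  -- the key lemma: if c ∈ 𝒜 \ t then c ⊓ Vsup ∈ 𝒜
  have L1 : ∀ c ∈ 𝒜, c ∉ t → c ⊓ Vsup ∈ 𝒜 := by
    intro c hc hct
    have hcct : cᶜ ∈ t := hcompl_t c hc hct
    obtain ⟨N, hN⟩ := eventually_atTop.mp (hconv cᶜ hcct)
    set F : C := ((Finset.range N).filter (· ∈ s)).sup V with hF
    have hF𝒜 : F ∈ 𝒜 := h𝒜.finsetSup_mem _ _ (fun n _ => hVmem n)
    have hFle : F ≤ Vsup := by
      apply Finset.sup_le
      intro n hn
      exact hVle n (Finset.mem_filter.mp hn).2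
    have hub : Vsup ≤ F ⊔ cᶜ := by
      apply hVsup.2
      rintro x ⟨n, hn, rfl⟩
      by_cases hnN : n < N
      · exact le_sup_of_le_left
          (Finset.le_sup (Finset.mem_filter.mpr ⟨Finset.mem_range.mpr hnN, hn⟩))
      · exact le_sup_of_le_right (hN n (not_lt.mp hnN))
    have heq : c ⊓ Vsup = c ⊓ F := by
      apply le_antisymm
      · calc c ⊓ Vsup ≤ c ⊓ (F ⊔ cᶜ) := inf_le_inf_left c hub
        _ = (c ⊓ F) ⊔ (c ⊓ cᶜ) := inf_sup_left c F cᶜ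
        _ = c ⊓ F := by simp
      · exact inf_le_inf_left c hFle
    rw [heq]
    exact h𝒜.inf_mem hc hF𝒜
  -- Vsup is not in 𝒜
  have hVsup𝒜 : Vsup ∉ 𝒜 := by
    intro hmem
    by_cases hvt : Vsup ∈ t
    · obtain ⟨N, hN⟩ := eventually_atTop.mp (hconv Vsup hvt)
      obtain ⟨n, hn, hNn⟩ := hscoinf.exists_gt N
      have h1 : V n ≤ Vsup ⊓ Vsupᶜ := le_inf (hN n hNn.le) (hVout n hn)
      rw [inf_compl_eq_bot] at h1
      exact hVne n (le_bot_iff.mp h1)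
    · have := hmeet₁ Vsupᶜ (hcompl_t Vsup hmem hvt)
      simp at this
  have h𝒜ℬ : 𝒜 ⊆ ℬ := fun a ha => hgen₁ (Or.inl ha)
  have hVsupℬ : Vsup ∈ ℬ := hgen₁ (Or.inr rfl)
  -- representation of elements of ℬ
  have hrep : ∀ x ∈ ℬ, ∃ a ∈ 𝒜, ∃ b ∈ 𝒜,
      x ⊓ Vsup = a ⊓ Vsup ∧ x ⊓ Vsupᶜ = b ⊓ Vsupᶜ := by
    set D : Set C := {x | ∃ a ∈ 𝒜, ∃ b ∈ 𝒜,
      x ⊓ Vsup = a ⊓ Vsup ∧ x ⊓ Vsupᶜ = b ⊓ Vsupᶜ} with hD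
    have hDsub : IsSubalg D := by
      refine ⟨⟨⊥, h𝒜.1, ⊥, h𝒜.1, rfl, rfl⟩, ?_, ?_⟩
      · rintro x ⟨a, ha, b, hb, hxa, hxb⟩
        exact ⟨aᶜ, h𝒜.2.1 a ha, bᶜ, h𝒜.2.1 b hb, compl_part hxa, compl_part hxb⟩
      · rintro x ⟨a, ha, b, hb, hxa, hxb⟩ y ⟨a', ha', b', hb', hya, hyb⟩
        refine ⟨a ⊔ a', h𝒜.2.2 a ha a' ha', b ⊔ b', h𝒜.2.2 b hb b' hb', ?_, ?_⟩
        · rw [inf_sup_right, inf_sup_right, hxa, hya]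
        · rw [inf_sup_right, inf_sup_right, hxb, hyb]
    have hgenD : 𝒜 ∪ {Vsup} ⊆ D := by
      rintro x (hx | hx)
      · exact ⟨x, hx, x, hx, rfl, rfl⟩
      · rw [Set.mem_singleton_iff] at hx
        subst hx
        exact ⟨⊤, h𝒜.top_mem, ⊥, h𝒜.1, by simp, by simp⟩
    exact fun x hx => hgen₂ D hDsub hgenD hx
  -- elements of ℬ meeted with an element of 𝒜 \ t land in 𝒜
  have hxc𝒜 : ∀ c ∈ 𝒜, c ∉ t → ∀ x ∈ ℬ, x ⊓ c ∈ 𝒜 := by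
    intro c hc hct x hx
    obtain ⟨a, ha, b, hb, hxa, hxb⟩ := hrep x hx
    have hcv : c ⊓ Vsup ∈ 𝒜 := L1 c hc hct
    have hcv' : c ⊓ Vsupᶜ ∈ 𝒜 := by
      have : c ⊓ Vsupᶜ = c ⊓ (c ⊓ Vsup)ᶜ := by
        rw [compl_inf, inf_sup_left]
        simp
      rw [this]
      exact h𝒜.inf_mem hc (h𝒜.2.1 _ hcv)
    have hxceq : x ⊓ c = (a ⊓ (c ⊓ Vsup)) ⊔ (b ⊓ (c ⊓ Vsupᶜ)) := by
      conv_lhs => rw [← split_eq x Vsup, inf_sup_right, hxa, hxb]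
      congr 1
      · rw [inf_assoc, inf_comm Vsup c]
      · rw [inf_assoc, inf_comm Vsupᶜ c]
    rw [hxceq]
    exact h𝒜.2.2 _ (h𝒜.inf_mem ha hcv) _ (h𝒜.inf_mem hb hcv')
  constructor
  · -- minimality
    constructor
    · exact Set.ssubset_def ▸ ⟨h𝒜ℬ, fun h => hVsup𝒜 (h hVsupℬ)⟩
    · intro D hD hAD hDB
      by_cases hc : D ⊆ 𝒜
      · exact Or.inl (subset_antisymm hc hAD)
      · right
        obtain ⟨x, hxD, hx𝒜⟩ := Set.not_subset.mp hc
        obtain ⟨a, ha, b, hb, hxa, hxb⟩ := hrep x (hDB hxD)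
        set y : C := x ∆ b with hy
        have hyD : y ∈ D := hD.symmDiff_mem hxD (hAD hb)
        set c : C := a ∆ b with hcdef
        have hc𝒜 : c ∈ 𝒜 := h𝒜.symmDiff_mem ha hb
        have hyv : y ⊓ Vsup = c ⊓ Vsup := by
          rw [hy, hcdef, inf_symmDiff_distrib_right, hxa, ← inf_symmDiff_distrib_right]
        have hyv' : y ⊓ Vsupᶜ = ⊥ := by
          rw [hy, inf_symmDiff_distrib_right, hxb, symmDiff_self]
        have hyeq : y = c ⊓ Vsup := by
          rw [← split_eq y Vsup, hyv, hyv', sup_bot_eq]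
        have hct : c ∈ t := by
          by_contra hct
          have : y ∈ 𝒜 := hyeq ▸ L1 c hc𝒜 hct
          have hx : x ∈ 𝒜 := by
            have : y ∆ b ∈ 𝒜 := h𝒜.symmDiff_mem this hb
            rwa [hy, symmDiff_symmDiff_cancel_right] at this
          exact hx𝒜 hx
        have hcct : cᶜ ∉ t := (htultra c hc𝒜).mp hct
        have hccv : cᶜ ⊓ Vsup ∈ 𝒜 := L1 cᶜ (h𝒜.2.1 c hc𝒜) hcct
        have hVD : Vsup ∈ D := by
          have : (c ⊓ Vsup) ⊔ (cᶜ ⊓ Vsup) = Vsup := by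
            rw [← inf_sup_right, sup_compl_eq_top, top_inf_eq]
          rw [← this]
          exact hD.2.2 _ (hyeq ▸ hyD) _ (hAD hccv)
        apply subset_antisymm hDB
        apply hgen₂ D hD
        rintro z (hz | hz)
        · exact hAD hz
        · rw [Set.mem_singleton_iff] at hz
          exact hz ▸ hVD
  · -- uniqueness of t
    intro u hu
    constructor
    · rintro ⟨w₁, w₂, hw₁, hw₂, hne, hw₁u, hw₂u⟩
      by_contra hut
      -- find c ∈ u \ t
      have hex : ∃ c, c ∈ u ∧ c ∉ t := by
        by_contra h
        push_neg at h
        apply hut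
        apply subset_antisymm h
        intro a hat
        by_contra hau
        have hacu : aᶜ ∈ u := by
          by_contra h2
          exact hau ((hu.2.2.2 a (htsub hat)).mpr h2)
        exact (htultra a (htsub hat)).mp hat (h aᶜ hacu)
      obtain ⟨c, hcu, hct⟩ := hex
      have hc𝒜 : c ∈ 𝒜 := hu.1 hcu
      have key : ∀ w : Set C, IsUltraOn ℬ w → w ∩ 𝒜 = u →
          ∀ x, x ∈ w ↔ x ∈ ℬ ∧ x ⊓ c ∈ u := by
        intro w hw hwu x
        have hcw : c ∈ w := by
          have : c ∈ w ∩ 𝒜 := hwu ▸ hcu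
          exact this.1
        constructor
        · intro hxw
          have hxB : x ∈ ℬ := hw.1 hxw
          have : x ⊓ c ∈ w := hw.2.2.1 x hxw c hcw
          have h𝒜m : x ⊓ c ∈ 𝒜 := hxc𝒜 c hc𝒜 hct x hxB
          have : x ⊓ c ∈ w ∩ 𝒜 := ⟨this, h𝒜m⟩
          rw [hwu] at this
          exact ⟨hxB, this⟩
        · rintro ⟨hxB, hxcu⟩
          have : x ⊓ c ∈ w ∩ 𝒜 := hwu ▸ hxcu
          exact hw.2.1 _ this.1 x hxB inf_le_left
      apply hne
      ext x
      rw [key w₁ hw₁ hw₁u x, key w₂ hw₂ hw₂u x]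
    · intro hut
      rw [hut]
      -- construct the two extensions
      have hW : ∀ z, z ∈ ℬ → (∀ a ∈ t, a ⊓ z ≠ ⊥) →
          (∀ x ∈ ℬ, ∃ a ∈ 𝒜, x ⊓ z = a ⊓ z) →
          IsUltraOn ℬ {x | x ∈ ℬ ∧ ∃ a ∈ t, a ⊓ z ≤ x} ∧
          {x | x ∈ ℬ ∧ ∃ a ∈ t, a ⊓ z ≤ x} ∩ 𝒜 = t := by
        intro z hzB hz hrepz
        constructor
        · refine ⟨fun x hx => hx.1, ?_, ?_, ?_⟩
          · rintro x ⟨-, a, hat, hle⟩ b hb hxb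
            exact ⟨hb, a, hat, hle.trans hxb⟩
          · rintro x ⟨hxB, a, hat, hle⟩ y ⟨hyB, a', hat', hle'⟩
            refine ⟨hℬ.inf_mem hxB hyB, a ⊓ a', htinf a hat a' hat', ?_⟩
            calc (a ⊓ a') ⊓ z ≤ (a ⊓ z) ⊓ (a' ⊓ z) := by
                  apply le_inf
                  · exact inf_le_inf_right z inf_le_left
                  · exact inf_le_inf_right z inf_le_right
            _ ≤ x ⊓ y := inf_le_inf hle hle'
          · intro x hx
            constructor
            · rintro ⟨-, a, hat, hle⟩ ⟨-, a', hat', hle'⟩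
              apply hz (a ⊓ a') (htinf a hat a' hat')
              apply le_bot_iff.mp
              calc (a ⊓ a') ⊓ z ≤ (a ⊓ z) ⊓ (a' ⊓ z) := by
                    apply le_inf
                    · exact inf_le_inf_right z inf_le_left
                    · exact inf_le_inf_right z inf_le_right
              _ ≤ x ⊓ xᶜ := inf_le_inf hle hle'
              _ = ⊥ := inf_compl_eq_bot
            · intro hxc
              obtain ⟨a, ha𝒜, hxz⟩ := hrepz x hx
              by_cases hat : a ∈ t
              · exact ⟨hx, a, hat, hxz ▸ inf_le_left⟩
              · exfalso
                apply hxc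
                refine ⟨hℬ.2.1 x hx, aᶜ, hcompl_t a ha𝒜 hat, ?_⟩
                rw [← compl_part hxz]
                exact inf_le_left
        · ext d
          constructor
          · rintro ⟨⟨-, a, hat, hle⟩, hd𝒜⟩
            by_contra hdt
            apply hz (a ⊓ dᶜ) (htinf a hat dᶜ (hcompl_t d hd𝒜 hdt))
            apply le_bot_iff.mp
            calc (a ⊓ dᶜ) ⊓ z = (a ⊓ z) ⊓ dᶜ := by
                  rw [inf_assoc, inf_comm dᶜ z, ← inf_assoc]
            _ ≤ d ⊓ dᶜ := inf_le_inf_right dᶜ hle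
            _ = ⊥ := inf_compl_eq_bot
          · intro hdt
            exact ⟨⟨h𝒜ℬ (htsub hdt), d, hdt, inf_le_left⟩, htsub hdt⟩
      have hrep₁ : ∀ x ∈ ℬ, ∃ a ∈ 𝒜, x ⊓ Vsup = a ⊓ Vsup := by
        intro x hx
        obtain ⟨a, ha, b, hb, hxa, -⟩ := hrep x hx
        exact ⟨a, ha, hxa⟩
      have hrep₂ : ∀ x ∈ ℬ, ∃ b ∈ 𝒜, x ⊓ Vsupᶜ = b ⊓ Vsupᶜ := by
        intro x hx
        obtain ⟨a, ha, b, hb, -, hxb⟩ := hrep x hx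
        exact ⟨b, hb, hxb⟩
      obtain ⟨hU₁, hI₁⟩ := hW Vsup hVsupℬ hmeet₁ hrep₁
      obtain ⟨hU₂, hI₂⟩ := hW Vsupᶜ (hℬ.2.1 _ hVsupℬ) hmeet₂ hrep₂
      refine ⟨_, _, hU₁, hU₂, ?_, hI₁, hI₂⟩
      intro h
      have hmem₁ : Vsup ∈ {x | x ∈ ℬ ∧ ∃ a ∈ t, a ⊓ Vsup ≤ x} :=
        ⟨hVsupℬ, ⊤, htop_t, by simp⟩
      rw [h] at hmem₁
      obtain ⟨-, a, hat, hle⟩ := hmem₁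
      apply hmeet₂ a hat
      apply le_bot_iff.mp
      calc a ⊓ Vsupᶜ ≤ Vsup ⊓ Vsupᶜ := le_inf hle inf_le_right
      _ = ⊥ := inf_compl_eq_bot
end

section
/- If a Boolean algebra A has the property that the Stone space St(A) contains a non-trivial convergent sequence of distinct ultrafilters, then A does not have the Nikodym property: there is a pointwise bounded but not uniformly bounded sequence of finitely additive measures on A. -/
open Filter TopologicalSpace

/-- If the Stone space of a Boolean algebra (realized as the algebra of clopen
subsets of a totally disconnected compact Hausdorff space) contains a
non-trivial convergent sequence, then the algebra fails the Nikodym property: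
there is a sequence of bounded finitely additive measures on the clopen algebra
which is pointwise bounded but not uniformly bounded. -/
theorem not_nikodym_of_convergent_sequence
    {K : Type} [TopologicalSpace K] [CompactSpace K] [T2Space K]
    [TotallyDisconnectedSpace K]
    (x : ℕ → K) (y : K)
    (hinj : Function.Injective x)
    (hne : ∀ n, x n ≠ y)
    (hconv : Tendsto x atTop (nhds y)) :
    ∃ μ : ℕ → Clopens K → ℝ,
      -- each μ n is finitely additive
      (∀ n, ∀ U V : Clopens K, U ⊓ V = ⊥ → μ n (U ⊔ V) = μ n U + μ n V) ∧
      -- each μ n is bounded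
      (∀ n, ∃ C : ℝ, ∀ U : Clopens K, |μ n U| ≤ C) ∧
      -- the sequence is pointwise bounded
      (∀ U : Clopens K, ∃ C : ℝ, ∀ n, |μ n U| ≤ C) ∧
      -- but not uniformly bounded
      (∀ C : ℝ, ∃ n, ∃ U : Clopens K, C < |μ n U|) := by
  classical
  set δ : K → Clopens K → ℝ := fun p U => if p ∈ (U : Set K) then 1 else 0 with hδ
  refine ⟨fun n U => (n : ℝ) * (δ (x n) U - δ y U), ?_, ?_, ?_, ?_⟩
  all_goals simp only []
  · intro n U V hUV
    have hd : ∀ p : K, δ p (U ⊔ V) = δ p U + δ p V := by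
      intro p
      have hmem : p ∈ ((U ⊔ V : Clopens K) : Set K) ↔ p ∈ (U : Set K) ∨ p ∈ (V : Set K) :=
        Iff.rfl
      have hnot : ¬ (p ∈ (U : Set K) ∧ p ∈ (V : Set K)) := by
        intro ⟨h1, h2⟩
        have : p ∈ ((U ⊓ V : Clopens K) : Set K) := ⟨h1, h2⟩
        rw [hUV] at this
        exact this
      simp only [hδ]
      by_cases h1 : p ∈ (U : Set K) <;> by_cases h2 : p ∈ (V : Set K) <;>
        simp [h1, h2, hmem] at hnot ⊢
    rw [hd, hd]; ring
  · intro n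
    refine ⟨2 * n, fun U => ?_⟩
    have h1 : |δ (x n) U - δ y U| ≤ 2 := by
      simp only [hδ]
      split_ifs <;> norm_num
    calc |(n : ℝ) * (δ (x n) U - δ y U)| = n * |δ (x n) U - δ y U| := by
          rw [abs_mul, abs_of_nonneg (by positivity)]
      _ ≤ n * 2 := by
          exact mul_le_mul_of_nonneg_left h1 (by positivity)
      _ = 2 * n := by ring
  · intro U
    -- eventually δ (x n) U = δ y U
    have hev : ∀ᶠ n in atTop, δ (x n) U = δ y U := by
      by_cases hy : y ∈ (U : Set K)
      · have : ∀ᶠ n in atTop, x n ∈ (U : Set K) :=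
          hconv (U.isClopen.isOpen.mem_nhds hy)
        filter_upwards [this] with n hn
        simp only [hδ, ← SetLike.mem_coe] at *
        simp [hn, hy]
      · have : ∀ᶠ n in atTop, x n ∈ ((U : Set K)ᶜ) :=
          hconv (U.isClopen.compl.isOpen.mem_nhds hy)
        filter_upwards [this] with n hn
        have hn' : x n ∉ (U : Set K) := hn
        simp only [hδ, ← SetLike.mem_coe] at *
        simp [hn', hy]
    obtain ⟨N, hN⟩ := eventually_atTop.mp hev
    refine ⟨N, fun n => ?_⟩
    by_cases hn : N ≤ n
    · rw [hN n hn]; simp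
    · push_neg at hn
      have h1 : |δ (x n) U - δ y U| ≤ 1 := by
        simp only [hδ]; split_ifs <;> norm_num
      calc |(n : ℝ) * (δ (x n) U - δ y U)| = n * |δ (x n) U - δ y U| := by
            rw [abs_mul, abs_of_nonneg (by positivity)]
        _ ≤ n * 1 := mul_le_mul_of_nonneg_left h1 (by positivity)
        _ ≤ N := by
            rw [mul_one]
            exact_mod_cast hn.le
  · intro C
    obtain ⟨n, hn⟩ := exists_nat_gt C
    -- find clopen containing x n but not y
    obtain ⟨V, hVclopen, hxV, hVsub⟩ :=
      compact_exists_isClopen_in_isOpen (isOpen_compl_singleton (x := y)) (hne n)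
    refine ⟨n, ⟨V, hVclopen⟩, ?_⟩
    have hyV : y ∉ V := fun h => hVsub h rfl
    have : δ (x n) ⟨V, hVclopen⟩ - δ y ⟨V, hVclopen⟩ = 1 := by
      simp [hδ, hxV, hyV]
    rw [this, mul_one, abs_of_nonneg (by positivity)]
    exact hn
end
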